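/- Let H be a numerical semigroup minimally generated by n₁, n₂, n₃ which is not symmetric, and let a₁,a₂,a₃,b₁,b₂,b₃ be positive integers such that, setting cᵢ = aᵢ + bᵢ, one has c₁n₁ = b₂n₂ + a₃n₃, c₂n₂ = a₁n₁ + b₃n₃, c₃n₃ = b₁n₁ + a₂n₂, and each cᵢ is the smallest positive integer c with c·nᵢ in the submonoid generated by the other two of n₁,n₂,n₃. Set dᵢ = min{aᵢ, bᵢ} for i = 1,2,3. Then tr(H) = (d₁n₁ + H) ∪ (d₂n₂ + H) ∪ (d₃n₃ + H) and res(H) = d₁·d₂·d₃. -/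

import Mathlib

set_option maxHeartbeats 1000000


namespace NumSgp

/-- A numerical semigroup: an additive submonoid of ℕ with finite complement. -/
def IsNumSgp (H : Set ℕ) : Prop :=
  0 ∈ H ∧ (∀ a ∈ H, ∀ b ∈ H, a + b ∈ H) ∧ Hᶜ.Finite

/-- Membership of an integer in (the image in ℤ of) `H ⊆ ℕ`. -/
def memZ (H : Set ℕ) (z : ℤ) : Prop := ∃ n ∈ H, (n : ℤ) = z

/-- The Frobenius number: the largest integer not in `H`. -/
noncomputable def frob (H : Set ℕ) : ℤ := sSup {z : ℤ | ¬ memZ H z}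

/-- The pseudo-Frobenius numbers of `H`. -/
def pseudoFrob (H : Set ℕ) : Set ℤ :=
  {f : ℤ | ¬ memZ H f ∧ ∀ m ∈ H, m ≠ 0 → memZ H (f + (m : ℤ))}

/-- The canonical ideal `Ω_H = {-f + h : f ∈ PF(H), h ∈ H}`. -/
def canIdeal (H : Set ℕ) : Set ℤ :=
  {z : ℤ | ∃ f ∈ pseudoFrob H, ∃ h ∈ H, z = -f + (h : ℤ)}

/-- The anti-canonical ideal `Ω_H⁻¹ = {x : x + Ω_H ⊆ H}`. -/
def antiCanIdeal (H : Set ℕ) : Set ℤ :=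
  {x : ℤ | ∀ w ∈ canIdeal H, memZ H (x + w)}

/-- The trace of `H`: the sumset `Ω_H + Ω_H⁻¹`. -/
def trace (H : Set ℕ) : Set ℤ :=
  {z : ℤ | ∃ w ∈ canIdeal H, ∃ x ∈ antiCanIdeal H, z = w + x}

/-- The conductor ideal `C_H = {x : x > Fr(H)}` (viewed inside ℤ). -/
noncomputable def condIdeal (H : Set ℕ) : Set ℤ := {z : ℤ | frob H < z}

/-- The residue of `H`: `|H ∖ tr(H)|`. -/
noncomputable def res (H : Set ℕ) : ℕ :=
  Set.ncard {h : ℕ | h ∈ H ∧ (h : ℤ) ∉ trace H}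

/-- The number of gaps `g(H)`. -/
noncomputable def gaps (H : Set ℕ) : ℕ := Set.ncard Hᶜ

/-- The number of non-gaps below the Frobenius number, `n(H)`. -/
noncomputable def nongaps (H : Set ℕ) : ℕ :=
  Set.ncard {x : ℕ | x ∈ H ∧ (x : ℤ) < frob H}

/-- `H` is symmetric if for all `x ∈ ℤ`, `x ∈ H` or `Fr(H) - x ∈ H`. -/
noncomputable def IsSymmetric (H : Set ℕ) : Prop :=
  ∀ z : ℤ, memZ H z ∨ memZ H (frob H - z)

/-- `H` is nearly Gorenstein if `M = H ∖ {0} ⊆ tr(H)`. -/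
def NearlyGorenstein (H : Set ℕ) : Prop :=
  ∀ h ∈ H, h ≠ 0 → (h : ℤ) ∈ trace H

/-- The submonoid of ℕ generated by a set. -/
def genBy (A : Set ℕ) : Set ℕ := (AddSubmonoid.closure A : Set ℕ)

end NumSgp

open NumSgp



lemma mem_genBy2 (m k x y : ℕ) : x*m + y*k ∈ genBy {m, k} := by
  have hm : m ∈ AddSubmonoid.closure ({m, k} : Set ℕ) :=
    AddSubmonoid.subset_closure (by simp)
  have hk : k ∈ AddSubmonoid.closure ({m, k} : Set ℕ) :=
    AddSubmonoid.subset_closure (by simp)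
  show x*m + y*k ∈ AddSubmonoid.closure ({m, k} : Set ℕ)
  have : x*m = x • m := by simp [smul_eq_mul]
  exact add_mem (by simpa [nsmul_eq_mul] using AddSubmonoid.nsmul_mem _ hm x)
    (by simpa [nsmul_eq_mul] using AddSubmonoid.nsmul_mem _ hk y)

lemma mem_genBy3 (n₁ n₂ n₃ x₁ x₂ x₃ : ℕ) :
    x₁*n₁ + x₂*n₂ + x₃*n₃ ∈ genBy {n₁, n₂, n₃} := by
  have h1 : n₁ ∈ AddSubmonoid.closure ({n₁, n₂, n₃} : Set ℕ) :=
    AddSubmonoid.subset_closure (by simp)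
  have h2 : n₂ ∈ AddSubmonoid.closure ({n₁, n₂, n₃} : Set ℕ) :=
    AddSubmonoid.subset_closure (by simp)
  have h3 : n₃ ∈ AddSubmonoid.closure ({n₁, n₂, n₃} : Set ℕ) :=
    AddSubmonoid.subset_closure (by simp)
  exact add_mem (add_mem (by simpa [nsmul_eq_mul] using AddSubmonoid.nsmul_mem _ h1 x₁)
    (by simpa [nsmul_eq_mul] using AddSubmonoid.nsmul_mem _ h2 x₂))
    (by simpa [nsmul_eq_mul] using AddSubmonoid.nsmul_mem _ h3 x₃)

lemma genBy2_elim {m k c : ℕ} (h : c ∈ genBy {m, k}) : ∃ x y : ℕ, c = x*m + y*k := by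
  have h' : c ∈ AddSubmonoid.closure ({m, k} : Set ℕ) := h
  clear h
  induction h' using AddSubmonoid.closure_induction with
  | mem x hx => rcases hx with rfl | rfl
                · exact ⟨1, 0, by ring⟩
                · exact ⟨0, 1, by ring⟩
  | zero => exact ⟨0, 0, by ring⟩
  | add x y _ _ ihx ihy =>
      obtain ⟨p, q, rfl⟩ := ihx; obtain ⟨r, s, rfl⟩ := ihy
      exact ⟨p + r, q + s, by ring⟩

lemma genBy3_elim {n₁ n₂ n₃ c : ℕ} (h : c ∈ genBy {n₁, n₂, n₃}) :
    ∃ x₁ x₂ x₃ : ℕ, c = x₁*n₁ + x₂*n₂ + x₃*n₃ := by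
  have h' : c ∈ AddSubmonoid.closure ({n₁, n₂, n₃} : Set ℕ) := h
  clear h
  induction h' using AddSubmonoid.closure_induction with
  | mem x hx => rcases hx with rfl | rfl | rfl
                · exact ⟨1, 0, 0, by ring⟩
                · exact ⟨0, 1, 0, by ring⟩
                · exact ⟨0, 0, 1, by ring⟩
  | zero => exact ⟨0, 0, 0, by ring⟩
  | add x y _ _ ihx ihy =>
      obtain ⟨p, q, r, rfl⟩ := ihx; obtain ⟨p', q', r', rfl⟩ := ihy
      exact ⟨p + p', q + q', r + r', by ring⟩


/-- positive-part value -/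
def pval (n₁ n₂ n₃ u₁ u₂ u₃ v₁ v₂ v₃ : ℕ) : ℕ :=
  (v₁-u₁)*n₁ + (v₂-u₂)*n₂ + (v₃-u₃)*n₃

/-- symmetric measure -/
def meas (n₁ n₂ n₃ u₁ u₂ u₃ v₁ v₂ v₃ : ℕ) : ℕ :=
  pval n₁ n₂ n₃ u₁ u₂ u₃ v₁ v₂ v₃ + pval n₁ n₂ n₃ v₁ v₂ v₃ u₁ u₂ u₃

lemma meas_comm (n₁ n₂ n₃ u₁ u₂ u₃ v₁ v₂ v₃ : ℕ) :
    meas n₁ n₂ n₃ u₁ u₂ u₃ v₁ v₂ v₃ = meas n₁ n₂ n₃ v₁ v₂ v₃ u₁ u₂ u₃ :=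
  Nat.add_comm _ _

lemma key_ineq2 (x y n : ℕ) (hx : 1 ≤ x) : (x-y)*n + (y-x)*n + 2*(min y 1)*n ≤ x*n + y*n := by
  have h : (x-y) + (y-x) + 2*(min y 1) ≤ x + y := by omega
  calc (x-y)*n + (y-x)*n + 2*(min y 1)*n = ((x-y)+(y-x)+2*(min y 1))*n := by ring
    _ ≤ (x+y)*n := mul_le_mul_left h n
    _ = x*n + y*n := by ring

lemma concl_neg {a₁ a₂ a₃ b₁ b₂ b₃ : ℕ} {u₁ u₂ u₃ v₁ v₂ v₃ : ℕ}
    (h : ∃ s t : ℤ, ((u₁:ℤ) - v₁ = s*((a₁:ℤ)+b₁) - t*a₁) ∧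
      ((u₂:ℤ) - v₂ = t*((a₂:ℤ)+b₂) - s*b₂) ∧ ((u₃:ℤ) - v₃ = -(s*a₃) - t*b₃)) :
    ∃ s t : ℤ, ((v₁:ℤ) - u₁ = s*((a₁:ℤ)+b₁) - t*a₁) ∧
      ((v₂:ℤ) - u₂ = t*((a₂:ℤ)+b₂) - s*b₂) ∧ ((v₃:ℤ) - u₃ = -(s*a₃) - t*b₃) := by
  obtain ⟨s, t, e1, e2, e3⟩ := h
  exact ⟨-s, -t, by linear_combination -e1, by linear_combination -e2, by linear_combination -e3⟩

lemma stepA {n₁ n₂ n₃ a₁ a₂ a₃ b₁ b₂ b₃ : ℕ}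
    (hn₂ : 0 < n₂) (hn₃ : 0 < n₃) (hb₂ : 0 < b₂) (ha₃ : 0 < a₃)
    (h1 : (a₁ + b₁) * n₁ = b₂ * n₂ + a₃ * n₃)
    (hm1 : ∀ c : ℕ, 0 < c → c * n₁ ∈ genBy {n₂, n₃} → a₁ + b₁ ≤ c)
    {N : ℕ}
    (ih : ∀ u₁ u₂ u₃ v₁ v₂ v₃ : ℕ, meas n₁ n₂ n₃ u₁ u₂ u₃ v₁ v₂ v₃ ≤ N →
      u₁*n₁+u₂*n₂+u₃*n₃ = v₁*n₁+v₂*n₂+v₃*n₃ →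
      ∃ s t : ℤ, ((v₁:ℤ) - u₁ = s*((a₁:ℤ)+b₁) - t*a₁) ∧
        ((v₂:ℤ) - u₂ = t*((a₂:ℤ)+b₂) - s*b₂) ∧ ((v₃:ℤ) - u₃ = -(s*a₃) - t*b₃))
    (u₁ u₂ u₃ v₁ v₂ v₃ : ℕ)
    (hμ : meas n₁ n₂ n₃ u₁ u₂ u₃ v₁ v₂ v₃ ≤ N+1)
    (heq : u₁*n₁+u₂*n₂+u₃*n₃ = v₁*n₁+v₂*n₂+v₃*n₃)
    (p1 : u₁ ≤ v₁) (p2 : v₂ ≤ u₂) (p3 : v₃ ≤ u₃) (ps : v₂ < u₂ ∨ v₃ < u₃) :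
    ∃ s t : ℤ, ((v₁:ℤ) - u₁ = s*((a₁:ℤ)+b₁) - t*a₁) ∧
      ((v₂:ℤ) - u₂ = t*((a₂:ℤ)+b₂) - s*b₂) ∧ ((v₃:ℤ) - u₃ = -(s*a₃) - t*b₃) := by
  obtain ⟨D1, rfl⟩ : ∃ d, v₁ = u₁ + d := ⟨v₁ - u₁, by omega⟩
  obtain ⟨E2, rfl⟩ : ∃ e, u₂ = v₂ + e := ⟨u₂ - v₂, by omega⟩
  obtain ⟨E3, rfl⟩ : ∃ e, u₃ = v₃ + e := ⟨u₃ - v₃, by omega⟩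
  have hE : 1 ≤ E2 + E3 := by omega
  have heqZ : (u₁:ℤ)*n₁ + ((v₂:ℤ)+E2)*n₂ + ((v₃:ℤ)+E3)*n₃
      = ((u₁:ℤ)+D1)*n₁ + (v₂:ℤ)*n₂ + (v₃:ℤ)*n₃ := by exact_mod_cast heq
  push_cast at heqZ
  have keyZ : (D1:ℤ)*n₁ = (E2:ℤ)*n₂ + (E3:ℤ)*n₃ := by linear_combination -heqZ
  have key : D1*n₁ = E2*n₂ + E3*n₃ := by exact_mod_cast keyZ
  have hpos : 0 < D1 := by
    rcases Nat.eq_zero_or_pos D1 with rfl | h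
    · exfalso
      rcases ps with h' | h'
      · have : 0 < E2*n₂ := Nat.mul_pos (by omega) hn₂
        simp at key; omega
      · have : 0 < E3*n₃ := Nat.mul_pos (by omega) hn₃
        simp at key; omega
    · exact h
  have hc : a₁ + b₁ ≤ D1 := hm1 D1 hpos (by rw [key]; exact mem_genBy2 n₂ n₃ E2 E3)
  obtain ⟨R, rfl⟩ : ∃ r, D1 = (a₁+b₁) + r := ⟨D1 - (a₁+b₁), by omega⟩
  push_cast at heqZ
  have h1Z : ((a₁:ℤ)+b₁)*n₁ = (b₂:ℤ)*n₂ + (a₃:ℤ)*n₃ := by exact_mod_cast h1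
  have heq' : u₁*n₁+(v₂+E2)*n₂+(v₃+E3)*n₃ = (u₁+R)*n₁+(v₂+b₂)*n₂+(v₃+a₃)*n₃ := by
    have : (u₁:ℤ)*n₁+((v₂:ℤ)+E2)*n₂+((v₃:ℤ)+E3)*n₃
        = ((u₁:ℤ)+R)*n₁+((v₂:ℤ)+b₂)*n₂+((v₃:ℤ)+a₃)*n₃ := by linear_combination heqZ + h1Z
    exact_mod_cast this
  have hmeas : meas n₁ n₂ n₃ u₁ (v₂+E2) (v₃+E3) (u₁+R) (v₂+b₂) (v₃+a₃) ≤ N := by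
    simp only [meas, pval] at hμ ⊢
    have r1 : u₁ + (a₁+b₁+R) - u₁ = (a₁+b₁)+R := by omega
    have r2 : v₂ - (v₂+E2) = 0 := by omega
    have r3 : v₃ - (v₃+E3) = 0 := by omega
    have r4 : u₁ - (u₁+(a₁+b₁+R)) = 0 := by omega
    have r5 : v₂ + E2 - v₂ = E2 := by omega
    have r6 : v₃ + E3 - v₃ = E3 := by omega
    rw [r1, r2, r3, r4, r5, r6] at hμ
    have s1 : u₁ + R - u₁ = R := by omega
    have s2 : v₂ + b₂ - (v₂+E2) = b₂ - E2 := by omega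
    have s3 : v₃ + a₃ - (v₃+E3) = a₃ - E3 := by omega
    have s4 : u₁ - (u₁+R) = 0 := by omega
    have s5 : v₂ + E2 - (v₂+b₂) = E2 - b₂ := by omega
    have s6 : v₃ + E3 - (v₃+a₃) = E3 - a₃ := by omega
    rw [s1, s2, s3, s4, s5, s6]
    have hsplit : ((a₁+b₁)+R)*n₁ = (a₁+b₁)*n₁ + R*n₁ := by ring
    rw [hsplit, h1] at hμ
    have k2 := key_ineq2 b₂ E2 n₂ hb₂
    have k3 := key_ineq2 a₃ E3 n₃ ha₃
    have slack : 1 ≤ 2*(min E2 1)*n₂ + 2*(min E3 1)*n₃ := by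
      rcases (by omega : 1 ≤ min E2 1 ∨ 1 ≤ min E3 1) with h | h
      · have : 1*1 ≤ 2*(min E2 1)*n₂ := by
          calc 1*1 ≤ (2*(min E2 1))*n₂ := Nat.mul_le_mul (by omega) hn₂
          _ = 2*(min E2 1)*n₂ := by ring
        omega
      · have : 1*1 ≤ 2*(min E3 1)*n₃ := by
          calc 1*1 ≤ (2*(min E3 1))*n₃ := Nat.mul_le_mul (by omega) hn₃
          _ = 2*(min E3 1)*n₃ := by ring
        omega
    omega
  obtain ⟨s, t, e1, e2, e3⟩ := ih _ _ _ _ _ _ hmeas heq'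
  push_cast at e1 e2 e3
  refine ⟨s+1, t, ?_, ?_, ?_⟩ <;> push_cast
  · linear_combination e1
  · linear_combination e2
  · linear_combination e3

lemma stepB {n₁ n₂ n₃ a₁ a₂ a₃ b₁ b₂ b₃ : ℕ}
    (hn₁ : 0 < n₁) (hn₃ : 0 < n₃) (ha₁ : 0 < a₁) (hb₃ : 0 < b₃)
    (h2 : (a₂ + b₂) * n₂ = a₁ * n₁ + b₃ * n₃)
    (hm2 : ∀ c : ℕ, 0 < c → c * n₂ ∈ genBy {n₁, n₃} → a₂ + b₂ ≤ c)
    {N : ℕ}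
    (ih : ∀ u₁ u₂ u₃ v₁ v₂ v₃ : ℕ, meas n₁ n₂ n₃ u₁ u₂ u₃ v₁ v₂ v₃ ≤ N →
      u₁*n₁+u₂*n₂+u₃*n₃ = v₁*n₁+v₂*n₂+v₃*n₃ →
      ∃ s t : ℤ, ((v₁:ℤ) - u₁ = s*((a₁:ℤ)+b₁) - t*a₁) ∧
        ((v₂:ℤ) - u₂ = t*((a₂:ℤ)+b₂) - s*b₂) ∧ ((v₃:ℤ) - u₃ = -(s*a₃) - t*b₃))
    (u₁ u₂ u₃ v₁ v₂ v₃ : ℕ)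
    (hμ : meas n₁ n₂ n₃ u₁ u₂ u₃ v₁ v₂ v₃ ≤ N+1)
    (heq : u₁*n₁+u₂*n₂+u₃*n₃ = v₁*n₁+v₂*n₂+v₃*n₃)
    (p1 : v₁ ≤ u₁) (p2 : u₂ ≤ v₂) (p3 : v₃ ≤ u₃) (ps : v₁ < u₁ ∨ v₃ < u₃) :
    ∃ s t : ℤ, ((v₁:ℤ) - u₁ = s*((a₁:ℤ)+b₁) - t*a₁) ∧
      ((v₂:ℤ) - u₂ = t*((a₂:ℤ)+b₂) - s*b₂) ∧ ((v₃:ℤ) - u₃ = -(s*a₃) - t*b₃) := by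
  obtain ⟨E1, rfl⟩ : ∃ e, u₁ = v₁ + e := ⟨u₁ - v₁, by omega⟩
  obtain ⟨D2, rfl⟩ : ∃ d, v₂ = u₂ + d := ⟨v₂ - u₂, by omega⟩
  obtain ⟨E3, rfl⟩ : ∃ e, u₃ = v₃ + e := ⟨u₃ - v₃, by omega⟩
  have hE : 1 ≤ E1 + E3 := by omega
  have heqZ : ((v₁:ℤ)+E1)*n₁ + (u₂:ℤ)*n₂ + ((v₃:ℤ)+E3)*n₃
      = (v₁:ℤ)*n₁ + ((u₂:ℤ)+D2)*n₂ + (v₃:ℤ)*n₃ := by exact_mod_cast heq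
  have keyZ : (D2:ℤ)*n₂ = (E1:ℤ)*n₁ + (E3:ℤ)*n₃ := by linear_combination -heqZ
  have key : D2*n₂ = E1*n₁ + E3*n₃ := by exact_mod_cast keyZ
  have hpos : 0 < D2 := by
    rcases Nat.eq_zero_or_pos D2 with rfl | h
    · exfalso
      rcases ps with h' | h'
      · have : 0 < E1*n₁ := Nat.mul_pos (by omega) hn₁
        simp at key; omega
      · have : 0 < E3*n₃ := Nat.mul_pos (by omega) hn₃
        simp at key; omega
    · exact h
  have hc : a₂ + b₂ ≤ D2 := hm2 D2 hpos (by rw [key]; exact mem_genBy2 n₁ n₃ E1 E3)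
  obtain ⟨R, rfl⟩ : ∃ r, D2 = (a₂+b₂) + r := ⟨D2 - (a₂+b₂), by omega⟩
  push_cast at heqZ
  have h2Z : ((a₂:ℤ)+b₂)*n₂ = (a₁:ℤ)*n₁ + (b₃:ℤ)*n₃ := by exact_mod_cast h2
  have heq' : (v₁+E1)*n₁+u₂*n₂+(v₃+E3)*n₃ = (v₁+a₁)*n₁+(u₂+R)*n₂+(v₃+b₃)*n₃ := by
    have : ((v₁:ℤ)+E1)*n₁+(u₂:ℤ)*n₂+((v₃:ℤ)+E3)*n₃
        = ((v₁:ℤ)+a₁)*n₁+((u₂:ℤ)+R)*n₂+((v₃:ℤ)+b₃)*n₃ := by linear_combination heqZ + h2Z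
    exact_mod_cast this
  have hmeas : meas n₁ n₂ n₃ (v₁+E1) u₂ (v₃+E3) (v₁+a₁) (u₂+R) (v₃+b₃) ≤ N := by
    simp only [meas, pval] at hμ ⊢
    have r1 : v₁ - (v₁+E1) = 0 := by omega
    have r2 : u₂ + (a₂+b₂+R) - u₂ = (a₂+b₂)+R := by omega
    have r3 : v₃ - (v₃+E3) = 0 := by omega
    have r4 : v₁ + E1 - v₁ = E1 := by omega
    have r5 : u₂ - (u₂+(a₂+b₂+R)) = 0 := by omega
    have r6 : v₃ + E3 - v₃ = E3 := by omega
    rw [r1, r2, r3, r4, r5, r6] at hμ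
    have s1 : v₁ + a₁ - (v₁+E1) = a₁ - E1 := by omega
    have s2 : u₂ + R - u₂ = R := by omega
    have s3 : v₃ + b₃ - (v₃+E3) = b₃ - E3 := by omega
    have s4 : v₁ + E1 - (v₁+a₁) = E1 - a₁ := by omega
    have s5 : u₂ - (u₂+R) = 0 := by omega
    have s6 : v₃ + E3 - (v₃+b₃) = E3 - b₃ := by omega
    rw [s1, s2, s3, s4, s5, s6]
    have hsplit : ((a₂+b₂)+R)*n₂ = (a₂+b₂)*n₂ + R*n₂ := by ring
    rw [hsplit, h2] at hμ
    have k1 := key_ineq2 a₁ E1 n₁ ha₁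
    have k3 := key_ineq2 b₃ E3 n₃ hb₃
    have slack : 1 ≤ 2*(min E1 1)*n₁ + 2*(min E3 1)*n₃ := by
      rcases (by omega : 1 ≤ min E1 1 ∨ 1 ≤ min E3 1) with h | h
      · have : 1*1 ≤ 2*(min E1 1)*n₁ := by
          calc 1*1 ≤ (2*(min E1 1))*n₁ := Nat.mul_le_mul (by omega) hn₁
          _ = 2*(min E1 1)*n₁ := by ring
        omega
      · have : 1*1 ≤ 2*(min E3 1)*n₃ := by
          calc 1*1 ≤ (2*(min E3 1))*n₃ := Nat.mul_le_mul (by omega) hn₃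
          _ = 2*(min E3 1)*n₃ := by ring
        omega
    omega
  obtain ⟨s, t, e1, e2, e3⟩ := ih _ _ _ _ _ _ hmeas heq'
  push_cast at e1 e2 e3
  refine ⟨s, t+1, ?_, ?_, ?_⟩ <;> push_cast
  · linear_combination e1
  · linear_combination e2
  · linear_combination e3

lemma stepC {n₁ n₂ n₃ a₁ a₂ a₃ b₁ b₂ b₃ : ℕ}
    (hn₁ : 0 < n₁) (hn₂ : 0 < n₂) (hb₁ : 0 < b₁) (ha₂ : 0 < a₂)
    (h3 : (a₃ + b₃) * n₃ = b₁ * n₁ + a₂ * n₂)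
    (hm3 : ∀ c : ℕ, 0 < c → c * n₃ ∈ genBy {n₁, n₂} → a₃ + b₃ ≤ c)
    {N : ℕ}
    (ih : ∀ u₁ u₂ u₃ v₁ v₂ v₃ : ℕ, meas n₁ n₂ n₃ u₁ u₂ u₃ v₁ v₂ v₃ ≤ N →
      u₁*n₁+u₂*n₂+u₃*n₃ = v₁*n₁+v₂*n₂+v₃*n₃ →
      ∃ s t : ℤ, ((v₁:ℤ) - u₁ = s*((a₁:ℤ)+b₁) - t*a₁) ∧
        ((v₂:ℤ) - u₂ = t*((a₂:ℤ)+b₂) - s*b₂) ∧ ((v₃:ℤ) - u₃ = -(s*a₃) - t*b₃))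
    (u₁ u₂ u₃ v₁ v₂ v₃ : ℕ)
    (hμ : meas n₁ n₂ n₃ u₁ u₂ u₃ v₁ v₂ v₃ ≤ N+1)
    (heq : u₁*n₁+u₂*n₂+u₃*n₃ = v₁*n₁+v₂*n₂+v₃*n₃)
    (p1 : v₁ ≤ u₁) (p2 : v₂ ≤ u₂) (p3 : u₃ ≤ v₃) (ps : v₁ < u₁ ∨ v₂ < u₂) :
    ∃ s t : ℤ, ((v₁:ℤ) - u₁ = s*((a₁:ℤ)+b₁) - t*a₁) ∧
      ((v₂:ℤ) - u₂ = t*((a₂:ℤ)+b₂) - s*b₂) ∧ ((v₃:ℤ) - u₃ = -(s*a₃) - t*b₃) := by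
  obtain ⟨E1, rfl⟩ : ∃ e, u₁ = v₁ + e := ⟨u₁ - v₁, by omega⟩
  obtain ⟨E2, rfl⟩ : ∃ e, u₂ = v₂ + e := ⟨u₂ - v₂, by omega⟩
  obtain ⟨D3, rfl⟩ : ∃ d, v₃ = u₃ + d := ⟨v₃ - u₃, by omega⟩
  have hE : 1 ≤ E1 + E2 := by omega
  have heqZ : ((v₁:ℤ)+E1)*n₁ + ((v₂:ℤ)+E2)*n₂ + (u₃:ℤ)*n₃
      = (v₁:ℤ)*n₁ + (v₂:ℤ)*n₂ + ((u₃:ℤ)+D3)*n₃ := by exact_mod_cast heq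
  have keyZ : (D3:ℤ)*n₃ = (E1:ℤ)*n₁ + (E2:ℤ)*n₂ := by linear_combination -heqZ
  have key : D3*n₃ = E1*n₁ + E2*n₂ := by exact_mod_cast keyZ
  have hpos : 0 < D3 := by
    rcases Nat.eq_zero_or_pos D3 with rfl | h
    · exfalso
      rcases ps with h' | h'
      · have : 0 < E1*n₁ := Nat.mul_pos (by omega) hn₁
        simp at key; omega
      · have : 0 < E2*n₂ := Nat.mul_pos (by omega) hn₂
        simp at key; omega
    · exact h
  have hc : a₃ + b₃ ≤ D3 := hm3 D3 hpos (by rw [key]; exact mem_genBy2 n₁ n₂ E1 E2)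
  obtain ⟨R, rfl⟩ : ∃ r, D3 = (a₃+b₃) + r := ⟨D3 - (a₃+b₃), by omega⟩
  push_cast at heqZ
  have h3Z : ((a₃:ℤ)+b₃)*n₃ = (b₁:ℤ)*n₁ + (a₂:ℤ)*n₂ := by exact_mod_cast h3
  have heq' : (v₁+E1)*n₁+(v₂+E2)*n₂+u₃*n₃ = (v₁+b₁)*n₁+(v₂+a₂)*n₂+(u₃+R)*n₃ := by
    have : ((v₁:ℤ)+E1)*n₁+((v₂:ℤ)+E2)*n₂+(u₃:ℤ)*n₃
        = ((v₁:ℤ)+b₁)*n₁+((v₂:ℤ)+a₂)*n₂+((u₃:ℤ)+R)*n₃ := by linear_combination heqZ + h3Z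
    exact_mod_cast this
  have hmeas : meas n₁ n₂ n₃ (v₁+E1) (v₂+E2) u₃ (v₁+b₁) (v₂+a₂) (u₃+R) ≤ N := by
    simp only [meas, pval] at hμ ⊢
    have r1 : v₁ - (v₁+E1) = 0 := by omega
    have r2 : v₂ - (v₂+E2) = 0 := by omega
    have r3 : u₃ + (a₃+b₃+R) - u₃ = (a₃+b₃)+R := by omega
    have r4 : v₁ + E1 - v₁ = E1 := by omega
    have r5 : v₂ + E2 - v₂ = E2 := by omega
    have r6 : u₃ - (u₃+(a₃+b₃+R)) = 0 := by omega
    rw [r1, r2, r3, r4, r5, r6] at hμ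
    have s1 : v₁ + b₁ - (v₁+E1) = b₁ - E1 := by omega
    have s2 : v₂ + a₂ - (v₂+E2) = a₂ - E2 := by omega
    have s3 : u₃ + R - u₃ = R := by omega
    have s4 : v₁ + E1 - (v₁+b₁) = E1 - b₁ := by omega
    have s5 : v₂ + E2 - (v₂+a₂) = E2 - a₂ := by omega
    have s6 : u₃ - (u₃+R) = 0 := by omega
    rw [s1, s2, s3, s4, s5, s6]
    have hsplit : ((a₃+b₃)+R)*n₃ = (a₃+b₃)*n₃ + R*n₃ := by ring
    rw [hsplit, h3] at hμ
    have k1 := key_ineq2 b₁ E1 n₁ hb₁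
    have k2 := key_ineq2 a₂ E2 n₂ ha₂
    have slack : 1 ≤ 2*(min E1 1)*n₁ + 2*(min E2 1)*n₂ := by
      rcases (by omega : 1 ≤ min E1 1 ∨ 1 ≤ min E2 1) with h | h
      · have : 1*1 ≤ 2*(min E1 1)*n₁ := by
          calc 1*1 ≤ (2*(min E1 1))*n₁ := Nat.mul_le_mul (by omega) hn₁
          _ = 2*(min E1 1)*n₁ := by ring
        omega
      · have : 1*1 ≤ 2*(min E2 1)*n₂ := by
          calc 1*1 ≤ (2*(min E2 1))*n₂ := Nat.mul_le_mul (by omega) hn₂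
          _ = 2*(min E2 1)*n₂ := by ring
        omega
    omega
  obtain ⟨s, t, e1, e2, e3⟩ := ih _ _ _ _ _ _ hmeas heq'
  push_cast at e1 e2 e3
  refine ⟨s-1, t-1, ?_, ?_, ?_⟩ <;> push_cast
  · linear_combination e1
  · linear_combination e2
  · linear_combination e3

lemma lattice_aux {n₁ n₂ n₃ a₁ a₂ a₃ b₁ b₂ b₃ : ℕ}
    (hn₁ : 0 < n₁) (hn₂ : 0 < n₂) (hn₃ : 0 < n₃)
    (ha₁ : 0 < a₁) (ha₂ : 0 < a₂) (ha₃ : 0 < a₃)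
    (hb₁ : 0 < b₁) (hb₂ : 0 < b₂) (hb₃ : 0 < b₃)
    (h1 : (a₁ + b₁) * n₁ = b₂ * n₂ + a₃ * n₃)
    (h2 : (a₂ + b₂) * n₂ = a₁ * n₁ + b₃ * n₃)
    (h3 : (a₃ + b₃) * n₃ = b₁ * n₁ + a₂ * n₂)
    (hm1 : ∀ c : ℕ, 0 < c → c * n₁ ∈ genBy {n₂, n₃} → a₁ + b₁ ≤ c)
    (hm2 : ∀ c : ℕ, 0 < c → c * n₂ ∈ genBy {n₁, n₃} → a₂ + b₂ ≤ c)
    (hm3 : ∀ c : ℕ, 0 < c → c * n₃ ∈ genBy {n₁, n₂} → a₃ + b₃ ≤ c) :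
    ∀ N : ℕ, ∀ u₁ u₂ u₃ v₁ v₂ v₃ : ℕ, meas n₁ n₂ n₃ u₁ u₂ u₃ v₁ v₂ v₃ ≤ N →
      u₁*n₁+u₂*n₂+u₃*n₃ = v₁*n₁+v₂*n₂+v₃*n₃ →
      ∃ s t : ℤ, ((v₁:ℤ) - u₁ = s*((a₁:ℤ)+b₁) - t*a₁) ∧
        ((v₂:ℤ) - u₂ = t*((a₂:ℤ)+b₂) - s*b₂) ∧ ((v₃:ℤ) - u₃ = -(s*a₃) - t*b₃) := by
  intro N
  induction N with
  | zero =>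
    intro u₁ u₂ u₃ v₁ v₂ v₃ hμ heq
    simp only [meas, pval] at hμ
    have g1 : (v₁-u₁)*n₁ = 0 := by omega
    have g2 : (v₂-u₂)*n₂ = 0 := by omega
    have g3 : (v₃-u₃)*n₃ = 0 := by omega
    have g4 : (u₁-v₁)*n₁ = 0 := by omega
    have g5 : (u₂-v₂)*n₂ = 0 := by omega
    have g6 : (u₃-v₃)*n₃ = 0 := by omega
    have e1 : v₁ = u₁ := by
      rcases Nat.mul_eq_zero.mp g1 with h | h
      · rcases Nat.mul_eq_zero.mp g4 with h' | h' <;> omega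
      · omega
    have e2 : v₂ = u₂ := by
      rcases Nat.mul_eq_zero.mp g2 with h | h
      · rcases Nat.mul_eq_zero.mp g5 with h' | h' <;> omega
      · omega
    have e3 : v₃ = u₃ := by
      rcases Nat.mul_eq_zero.mp g3 with h | h
      · rcases Nat.mul_eq_zero.mp g6 with h' | h' <;> omega
      · omega
    subst e1; subst e2; subst e3
    exact ⟨0, 0, by push_cast; ring, by push_cast; ring, by push_cast; ring⟩
  | succ N ih =>
    intro u₁ u₂ u₃ v₁ v₂ v₃ hμ heq
    have hZ : (u₁:ℤ)*n₁+(u₂:ℤ)*n₂+(u₃:ℤ)*n₃ = (v₁:ℤ)*n₁+(v₂:ℤ)*n₂+(v₃:ℤ)*n₃ := by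
      exact_mod_cast heq
    have hμ' : meas n₁ n₂ n₃ v₁ v₂ v₃ u₁ u₂ u₃ ≤ N + 1 := by
      rw [meas_comm n₁ n₂ n₃ v₁ v₂ v₃ u₁ u₂ u₃]; exact hμ
    have hn₁Z : (0:ℤ) < n₁ := by exact_mod_cast hn₁
    have hn₂Z : (0:ℤ) < n₂ := by exact_mod_cast hn₂
    have hn₃Z : (0:ℤ) < n₃ := by exact_mod_cast hn₃
    rcases le_or_gt u₁ v₁ with q1 | q1 <;> rcases le_or_gt u₂ v₂ with q2 | q2 <;>
      rcases le_or_gt u₃ v₃ with q3 | q3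
    -- (≤,≤,≤)
    · obtain ⟨d1, rfl⟩ : ∃ d, v₁ = u₁ + d := ⟨v₁-u₁, by omega⟩
      obtain ⟨d2, rfl⟩ : ∃ d, v₂ = u₂ + d := ⟨v₂-u₂, by omega⟩
      obtain ⟨d3, rfl⟩ : ∃ d, v₃ = u₃ + d := ⟨v₃-u₃, by omega⟩
      push_cast at hZ
      have key : (d1:ℤ)*n₁ + (d2:ℤ)*n₂ + (d3:ℤ)*n₃ = 0 := by linear_combination -hZ
      have keyN : d1*n₁ + d2*n₂ + d3*n₃ = 0 := by exact_mod_cast key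
      have e1 : d1 = 0 := by
        rcases Nat.mul_eq_zero.mp (show d1*n₁ = 0 by omega) with h | h <;> omega
      have e2 : d2 = 0 := by
        rcases Nat.mul_eq_zero.mp (show d2*n₂ = 0 by omega) with h | h <;> omega
      have e3 : d3 = 0 := by
        rcases Nat.mul_eq_zero.mp (show d3*n₃ = 0 by omega) with h | h <;> omega
      subst e1; subst e2; subst e3
      exact ⟨0, 0, by push_cast; ring, by push_cast; ring, by push_cast; ring⟩
    -- (≤,≤,<) : stepC on (v,u)
    · by_cases hor : u₁ < v₁ ∨ u₂ < v₂
      · exact concl_neg (stepC hn₁ hn₂ hb₁ ha₂ h3 hm3 ih v₁ v₂ v₃ u₁ u₂ u₃ hμ' heq.symm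
          q1 q2 q3.le hor)
      · exfalso
        push_neg at hor
        have e1 : v₁ = u₁ := by omega
        have e2 : v₂ = u₂ := by omega
        subst e1; subst e2
        have : ((v₃:ℤ)+1)*n₃ ≤ (u₃:ℤ)*n₃ :=
          mul_le_mul_of_nonneg_right (by exact_mod_cast q3) (by positivity)
        nlinarith
    -- (≤,<,≤) : stepB on (v,u)
    · by_cases hor : u₁ < v₁ ∨ u₃ < v₃
      · exact concl_neg (stepB hn₁ hn₃ ha₁ hb₃ h2 hm2 ih v₁ v₂ v₃ u₁ u₂ u₃ hμ' heq.symm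
          q1 q2.le q3 hor)
      · exfalso
        push_neg at hor
        have e1 : v₁ = u₁ := by omega
        have e3 : v₃ = u₃ := by omega
        subst e1; subst e3
        have : ((v₂:ℤ)+1)*n₂ ≤ (u₂:ℤ)*n₂ :=
          mul_le_mul_of_nonneg_right (by exact_mod_cast q2) (by positivity)
        nlinarith
    -- (≤,<,<) : stepA on (u,v)
    · exact stepA hn₂ hn₃ hb₂ ha₃ h1 hm1 ih u₁ u₂ u₃ v₁ v₂ v₃ hμ heq q1 q2.le q3.le
        (Or.inl q2)
    -- (<,≤,≤) : stepA on (v,u)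
    · by_cases hor : u₂ < v₂ ∨ u₃ < v₃
      · exact concl_neg (stepA hn₂ hn₃ hb₂ ha₃ h1 hm1 ih v₁ v₂ v₃ u₁ u₂ u₃ hμ' heq.symm
          q1.le q2 q3 hor)
      · exfalso
        push_neg at hor
        have e2 : v₂ = u₂ := by omega
        have e3 : v₃ = u₃ := by omega
        subst e2; subst e3
        have : ((v₁:ℤ)+1)*n₁ ≤ (u₁:ℤ)*n₁ :=
          mul_le_mul_of_nonneg_right (by exact_mod_cast q1) (by positivity)
        nlinarith
    -- (<,≤,<) : stepB on (u,v)
    · exact stepB hn₁ hn₃ ha₁ hb₃ h2 hm2 ih u₁ u₂ u₃ v₁ v₂ v₃ hμ heq q1.le q2 q3.le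
        (Or.inl q1)
    -- (<,<,≤) : stepC on (u,v)
    · exact stepC hn₁ hn₂ hb₁ ha₂ h3 hm3 ih u₁ u₂ u₃ v₁ v₂ v₃ hμ heq q1.le q2.le q3
        (Or.inl q1)
    -- (<,<,<) : impossible
    · exfalso
      have k1 : ((v₁:ℤ)+1)*n₁ ≤ (u₁:ℤ)*n₁ :=
        mul_le_mul_of_nonneg_right (by exact_mod_cast q1) (by positivity)
      have k2 : ((v₂:ℤ)+1)*n₂ ≤ (u₂:ℤ)*n₂ :=
        mul_le_mul_of_nonneg_right (by exact_mod_cast q2) (by positivity)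
      have k3 : ((v₃:ℤ)+1)*n₃ ≤ (u₃:ℤ)*n₃ :=
        mul_le_mul_of_nonneg_right (by exact_mod_cast q3) (by positivity)
      nlinarith

lemma lattice {n₁ n₂ n₃ a₁ a₂ a₃ b₁ b₂ b₃ : ℕ}
    (hn₁ : 0 < n₁) (hn₂ : 0 < n₂) (hn₃ : 0 < n₃)
    (ha₁ : 0 < a₁) (ha₂ : 0 < a₂) (ha₃ : 0 < a₃)
    (hb₁ : 0 < b₁) (hb₂ : 0 < b₂) (hb₃ : 0 < b₃)
    (h1 : (a₁ + b₁) * n₁ = b₂ * n₂ + a₃ * n₃)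
    (h2 : (a₂ + b₂) * n₂ = a₁ * n₁ + b₃ * n₃)
    (h3 : (a₃ + b₃) * n₃ = b₁ * n₁ + a₂ * n₂)
    (hm1 : ∀ c : ℕ, 0 < c → c * n₁ ∈ genBy {n₂, n₃} → a₁ + b₁ ≤ c)
    (hm2 : ∀ c : ℕ, 0 < c → c * n₂ ∈ genBy {n₁, n₃} → a₂ + b₂ ≤ c)
    (hm3 : ∀ c : ℕ, 0 < c → c * n₃ ∈ genBy {n₁, n₂} → a₃ + b₃ ≤ c)
    (u₁ u₂ u₃ v₁ v₂ v₃ : ℕ)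
    (heq : u₁*n₁+u₂*n₂+u₃*n₃ = v₁*n₁+v₂*n₂+v₃*n₃) :
    ∃ s t : ℤ, ((v₁:ℤ) - u₁ = s*((a₁:ℤ)+b₁) - t*a₁) ∧
      ((v₂:ℤ) - u₂ = t*((a₂:ℤ)+b₂) - s*b₂) ∧ ((v₃:ℤ) - u₃ = -(s*a₃) - t*b₃) :=
  lattice_aux hn₁ hn₂ hn₃ ha₁ ha₂ ha₃ hb₁ hb₂ hb₃ h1 h2 h3 hm1 hm2 hm3
    _ u₁ u₂ u₃ v₁ v₂ v₃ le_rfl heq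

section ZLemmas
variable {a₁ a₂ a₃ b₁ b₂ b₃ : ℤ}

/-- f₁ ∉ H -/
lemma no_f1 (ha₁ : 1 ≤ a₁) (ha₂ : 1 ≤ a₂) (ha₃ : 1 ≤ a₃)
    (hb₁ : 1 ≤ b₁) (hb₂ : 1 ≤ b₂) (hb₃ : 1 ≤ b₃)
    {x₁ x₂ x₃ s t : ℤ} (hx₁ : 0 ≤ x₁) (hx₂ : 0 ≤ x₂) (hx₃ : 0 ≤ x₃)
    (e1 : x₁ + 1 = t*a₁ - s*(a₁+b₁))
    (e2 : x₂ = (a₂+b₂) - 1 + s*b₂ - t*(a₂+b₂))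
    (e3 : x₃ = a₃ - 1 + s*a₃ + t*b₃) : False := by
  rcases lt_trichotomy s 0 with hs | hs | hs
  · -- s ≤ -1 : e3 forces t ≥ 1, then e2 fails
    have hs' : s ≤ -1 := by omega
    have p1 : s*a₃ ≤ -a₃ := by nlinarith [mul_nonneg (by linarith : (0:ℤ) ≤ -1-s) (by linarith : (0:ℤ) ≤ a₃)]
    have ht : 1 ≤ t := by
      by_contra hc
      push_neg at hc
      have : t*b₃ ≤ 0 := by nlinarith [mul_nonneg (by linarith : (0:ℤ) ≤ -t) (by linarith : (0:ℤ) ≤ b₃)]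
      linarith
    have p2 : s*b₂ ≤ -b₂ := by nlinarith [mul_nonneg (by linarith : (0:ℤ) ≤ -1-s) (by linarith : (0:ℤ) ≤ b₂)]
    have p3 : (a₂+b₂) ≤ t*(a₂+b₂) := by nlinarith [mul_nonneg (by linarith : (0:ℤ) ≤ t-1) (by linarith : (0:ℤ) ≤ a₂+b₂)]
    linarith
  · subst hs
    have ht : 1 ≤ t := by
      by_contra hc
      push_neg at hc
      have : t*a₁ ≤ 0 := by nlinarith [mul_nonneg (by linarith : (0:ℤ) ≤ -t) (by linarith : (0:ℤ) ≤ a₁)]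
      linarith
    have p3 : (a₂+b₂) ≤ t*(a₂+b₂) := by nlinarith [mul_nonneg (by linarith : (0:ℤ) ≤ t-1) (by linarith : (0:ℤ) ≤ a₂+b₂)]
    linarith
  · -- s ≥ 1
    have hs' : 1 ≤ s := hs
    have hsb : 1 ≤ s*b₁ := by nlinarith [mul_nonneg (by linarith : (0:ℤ) ≤ s-1) (by linarith : (0:ℤ) ≤ b₁)]
    have ht : s + 1 ≤ t := by
      by_contra hc
      push_neg at hc
      have : (t-s)*a₁ ≤ 0 := by nlinarith [mul_nonneg (by linarith : (0:ℤ) ≤ s-t) (by linarith : (0:ℤ) ≤ a₁)]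
      nlinarith
    have p1 : s*(a₂+b₂) ≤ (t-1)*(a₂+b₂) := by
      nlinarith [mul_nonneg (by linarith : (0:ℤ) ≤ t-1-s) (by linarith : (0:ℤ) ≤ a₂+b₂)]
    have p2 : a₂ ≤ s*a₂ := by nlinarith [mul_nonneg (by linarith : (0:ℤ) ≤ s-1) (by linarith : (0:ℤ) ≤ a₂)]
    nlinarith

/-- f₂ ∉ H -/
lemma no_f2 (ha₁ : 1 ≤ a₁) (ha₂ : 1 ≤ a₂) (ha₃ : 1 ≤ a₃)
    (hb₁ : 1 ≤ b₁) (hb₂ : 1 ≤ b₂) (hb₃ : 1 ≤ b₃)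
    {x₁ x₂ x₃ s t : ℤ} (hx₁ : 0 ≤ x₁) (hx₂ : 0 ≤ x₂) (hx₃ : 0 ≤ x₃)
    (e1 : x₁ + 1 = t*a₁ - s*(a₁+b₁))
    (e2 : x₂ = b₂ - 1 + s*b₂ - t*(a₂+b₂))
    (e3 : x₃ = (a₃+b₃) - 1 + s*a₃ + t*b₃) : False := by
  rcases le_or_gt t 0 with ht | ht
  · -- t ≤ 0 forces s ≤ -1, then t ≤ -1 from e2, then e3 contradiction
    have hsc : s*(a₁+b₁) ≤ -1 := by nlinarith [mul_nonneg (by linarith : (0:ℤ) ≤ -t) (by linarith : (0:ℤ) ≤ a₁)]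
    have hs : s ≤ -1 := by
      by_contra hc
      push_neg at hc
      have : 0 ≤ s*(a₁+b₁) := by nlinarith [mul_nonneg (by linarith : (0:ℤ) ≤ s) (by linarith : (0:ℤ) ≤ a₁+b₁)]
      linarith
    have p1 : s*b₂ ≤ -b₂ := by nlinarith [mul_nonneg (by linarith : (0:ℤ) ≤ -1-s) (by linarith : (0:ℤ) ≤ b₂)]
    have ht1 : t ≤ -1 := by
      by_contra hc
      push_neg at hc
      have hteq : t = 0 := by omega
      subst hteq
      simp at e2
      linarith
    have p2 : s*a₃ ≤ -a₃ := by nlinarith [mul_nonneg (by linarith : (0:ℤ) ≤ -1-s) (by linarith : (0:ℤ) ≤ a₃)]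
    have p3 : t*b₃ ≤ -b₃ := by nlinarith [mul_nonneg (by linarith : (0:ℤ) ≤ -1-t) (by linarith : (0:ℤ) ≤ b₃)]
    linarith
  · -- t ≥ 1
    rcases le_or_gt s (-1) with hs | hs
    · have p1 : s*b₂ ≤ -b₂ := by nlinarith [mul_nonneg (by linarith : (0:ℤ) ≤ -1-s) (by linarith : (0:ℤ) ≤ b₂)]
      have p2 : (a₂+b₂) ≤ t*(a₂+b₂) := by nlinarith [mul_nonneg (by linarith : (0:ℤ) ≤ t-1) (by linarith : (0:ℤ) ≤ a₂+b₂)]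
      linarith
    · -- s ≥ 0
      have hs' : 0 ≤ s := by omega
      have hst : t ≤ s := by
        by_contra hc
        push_neg at hc
        have p2 : t*(a₂+b₂) ≥ (s+1)*(a₂+b₂) := by
          nlinarith [mul_nonneg (by linarith : (0:ℤ) ≤ t-s-1) (by linarith : (0:ℤ) ≤ a₂+b₂)]
        nlinarith
      have p3 : t*b₁ ≥ b₁ := by nlinarith [mul_nonneg (by linarith : (0:ℤ) ≤ t-1) (by linarith : (0:ℤ) ≤ b₁)]
      have p4 : s*(a₁+b₁) ≥ t*(a₁+b₁) := by
        nlinarith [mul_nonneg (by linarith : (0:ℤ) ≤ s-t) (by linarith : (0:ℤ) ≤ a₁+b₁)]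
      nlinarith
end ZLemmas

section ZLemmas2
variable {a₁ a₂ a₃ b₁ b₂ b₃ : ℤ}

/-- classification of decompositions for f + n₂ -/
lemma Vcase (ha₁ : 1 ≤ a₁) (ha₂ : 1 ≤ a₂) (ha₃ : 1 ≤ a₃)
    (hb₁ : 1 ≤ b₁) (hb₂ : 1 ≤ b₂) (hb₃ : 1 ≤ b₃)
    {s t : ℤ}
    (hv0 : 0 ≤ s*(a₁+b₁) - t*a₁ - 1) (hv1 : s*(a₁+b₁) - t*a₁ - 1 ≤ (a₁+b₁) - 1)
    (hu0 : 0 ≤ s*b₂ - t*(a₂+b₂) - 1) (hu1 : s*b₂ - t*(a₂+b₂) - 1 ≤ (a₂+b₂) - 1) :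
    (s = 1 ∧ t = 0) ∨ (s = 0 ∧ t = -1) := by
  rcases lt_trichotomy s 0 with hs | hs | hs
  · -- s ≤ -1 : then from hv0, t ≤ -1; set p = -s ≥ 1, q = -t ≥ 1
    exfalso
    have hs' : s ≤ -1 := by omega
    have hsc : s*(a₁+b₁) ≤ -(a₁+b₁) := by
      nlinarith [mul_nonneg (by linarith : (0:ℤ) ≤ -1-s) (by linarith : (0:ℤ) ≤ a₁+b₁)]
    have ht : t ≤ -1 := by
      by_contra hc
      push_neg at hc
      have : 0 ≤ t*a₁ := by nlinarith [mul_nonneg (by linarith : (0:ℤ) ≤ t) (by linarith : (0:ℤ) ≤ a₁)]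
      linarith
    -- from hv0 : (-t)*a₁ ≥ 1 + (-s)*(a₁+b₁)  → q ≥ p+1
    have hqp : (-t) ≥ (-s) + 1 := by
      by_contra hc
      push_neg at hc
      have : (-t)*a₁ ≤ (-s)*a₁ := by
        nlinarith [mul_nonneg (by linarith : (0:ℤ) ≤ (-s) - (-t)) (by linarith : (0:ℤ) ≤ a₁)]
      nlinarith [mul_nonneg (by linarith : (0:ℤ) ≤ -s-1) (by linarith : (0:ℤ) ≤ b₁),
        mul_nonneg (by linarith : (0:ℤ) ≤ -s) (by linarith : (0:ℤ) ≤ b₁)]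
    -- hu1 : (-t)*(a₂+b₂) - (-s)*b₂ ≤ a₂+b₂ ; but (-t) ≥ (-s)+1 gives LHS ≥ (a₂+b₂) + (-s)*a₂ + ... 
    have key : (-t)*(a₂+b₂) ≥ ((-s)+1)*(a₂+b₂) := by
      nlinarith [mul_nonneg (by linarith : (0:ℤ) ≤ (-t) - ((-s)+1)) (by linarith : (0:ℤ) ≤ a₂+b₂)]
    nlinarith [mul_nonneg (by linarith : (0:ℤ) ≤ -s) (by linarith : (0:ℤ) ≤ a₂)]
  · -- s = 0 : from hv0, t ≤ -1 ; from hu1, t ≥ -1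
    subst hs
    right
    have ht : t ≤ -1 := by
      by_contra hc
      push_neg at hc
      have : 0 ≤ t*a₁ := by nlinarith [mul_nonneg (by linarith : (0:ℤ) ≤ t) (by linarith : (0:ℤ) ≤ a₁)]
      linarith
    have ht2 : -1 ≤ t := by
      by_contra hc
      push_neg at hc
      have : (-t)*(a₂+b₂) ≥ 2*(a₂+b₂) := by
        nlinarith [mul_nonneg (by linarith : (0:ℤ) ≤ -t-2) (by linarith : (0:ℤ) ≤ a₂+b₂)]
      nlinarith
    omega
  · -- s ≥ 1
    left
    have hs' : 1 ≤ s := hs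
    rcases lt_trichotomy s 1 with h | h | h
    · omega
    · subst h
      constructor
      · rfl
      -- s = 1: from hv1 : -t*a₁ ≤ 0 → t ≥ 0 ; from hu0 : b₂ - t*(a₂+b₂) ≥ 1 → t ≤ 0
      have ht1 : 0 ≤ t := by
        by_contra hc
        push_neg at hc
        have : (-t)*a₁ ≥ a₁ := by
          nlinarith [mul_nonneg (by linarith : (0:ℤ) ≤ -t-1) (by linarith : (0:ℤ) ≤ a₁)]
        nlinarith
      have ht2 : t ≤ 0 := by
        by_contra hc
        push_neg at hc
        have : t*(a₂+b₂) ≥ a₂+b₂ := by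
          nlinarith [mul_nonneg (by linarith : (0:ℤ) ≤ t-1) (by linarith : (0:ℤ) ≤ a₂+b₂)]
        nlinarith
      omega
    · -- s ≥ 2 : from hv1, t ≥ s ≥ 2 hence hu0 fails
      exfalso
      have hs2 : 2 ≤ s := h
      have ht : s ≤ t := by
        by_contra hc
        push_neg at hc
        -- t ≤ s - 1 : hv1 : (s-1)*(a₁+b₁) ≤ t*a₁ - b₁ + ... 
        have h1 : t*a₁ ≤ (s-1)*a₁ := by
          nlinarith [mul_nonneg (by linarith : (0:ℤ) ≤ s-1-t) (by linarith : (0:ℤ) ≤ a₁)]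
        nlinarith [mul_nonneg (by linarith : (0:ℤ) ≤ s-1) (by linarith : (0:ℤ) ≤ b₁)]
      have h2 : t*(a₂+b₂) ≥ s*(a₂+b₂) := by
        nlinarith [mul_nonneg (by linarith : (0:ℤ) ≤ t-s) (by linarith : (0:ℤ) ≤ a₂+b₂)]
      nlinarith [mul_nonneg (by linarith : (0:ℤ) ≤ s) (by linarith : (0:ℤ) ≤ a₂)]

/-- classification of decompositions for f + n₃ -/
lemma Wcase (ha₁ : 1 ≤ a₁) (ha₂ : 1 ≤ a₂) (ha₃ : 1 ≤ a₃)
    (hb₁ : 1 ≤ b₁) (hb₂ : 1 ≤ b₂) (hb₃ : 1 ≤ b₃)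
    {s t : ℤ}
    (hw0 : 0 ≤ s*(a₁+b₁) - t*a₁ - 1) (hw1 : s*(a₁+b₁) - t*a₁ - 1 ≤ (a₁+b₁) - 1)
    (hu0 : 0 ≤ s*a₃ + t*b₃ - 1) (hu1 : s*a₃ + t*b₃ - 1 ≤ (a₃+b₃) - 1) :
    s = 1 ∧ (t = 0 ∨ t = 1) := by
  rcases lt_trichotomy s 0 with hs | hs | hs
  · exfalso
    have hs' : s ≤ -1 := by omega
    have hsc : s*(a₁+b₁) ≤ -(a₁+b₁) := by
      nlinarith [mul_nonneg (by linarith : (0:ℤ) ≤ -1-s) (by linarith : (0:ℤ) ≤ a₁+b₁)]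
    have ht : t ≤ -1 := by
      by_contra hc
      push_neg at hc
      have : 0 ≤ t*a₁ := by nlinarith [mul_nonneg (by linarith : (0:ℤ) ≤ t) (by linarith : (0:ℤ) ≤ a₁)]
      linarith
    have p1 : s*a₃ ≤ -a₃ := by nlinarith [mul_nonneg (by linarith : (0:ℤ) ≤ -1-s) (by linarith : (0:ℤ) ≤ a₃)]
    have p2 : t*b₃ ≤ -b₃ := by nlinarith [mul_nonneg (by linarith : (0:ℤ) ≤ -1-t) (by linarith : (0:ℤ) ≤ b₃)]
    linarith
  · exfalso
    subst hs
    have ht : t ≤ -1 := by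
      by_contra hc
      push_neg at hc
      have : 0 ≤ t*a₁ := by nlinarith [mul_nonneg (by linarith : (0:ℤ) ≤ t) (by linarith : (0:ℤ) ≤ a₁)]
      linarith
    have p2 : t*b₃ ≤ -b₃ := by nlinarith [mul_nonneg (by linarith : (0:ℤ) ≤ -1-t) (by linarith : (0:ℤ) ≤ b₃)]
    simp at hu0
    linarith
  · rcases lt_trichotomy s 1 with h | h | h
    · omega
    · subst h
      refine ⟨rfl, ?_⟩
      have ht1 : 0 ≤ t := by
        by_contra hc
        push_neg at hc
        have : (-t)*a₁ ≥ a₁ := by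
          nlinarith [mul_nonneg (by linarith : (0:ℤ) ≤ -t-1) (by linarith : (0:ℤ) ≤ a₁)]
        nlinarith
      have ht2 : t ≤ 1 := by
        by_contra hc
        push_neg at hc
        have : t*b₃ ≥ 2*b₃ := by
          nlinarith [mul_nonneg (by linarith : (0:ℤ) ≤ t-2) (by linarith : (0:ℤ) ≤ b₃)]
        nlinarith
      omega
    · exfalso
      have hs2 : 2 ≤ s := h
      have ht : s ≤ t := by
        by_contra hc
        push_neg at hc
        have h1 : t*a₁ ≤ (s-1)*a₁ := by
          nlinarith [mul_nonneg (by linarith : (0:ℤ) ≤ s-1-t) (by linarith : (0:ℤ) ≤ a₁)]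
        nlinarith [mul_nonneg (by linarith : (0:ℤ) ≤ s-1) (by linarith : (0:ℤ) ≤ b₁)]
      have p1 : s*a₃ ≥ 2*a₃ := by
        nlinarith [mul_nonneg (by linarith : (0:ℤ) ≤ s-2) (by linarith : (0:ℤ) ≤ a₃)]
      have p2 : t*b₃ ≥ 2*b₃ := by
        nlinarith [mul_nonneg (by linarith : (0:ℤ) ≤ t-2) (by linarith : (0:ℤ) ≤ b₃)]
      linarith
end ZLemmas2

section ZLemmas3
variable {a₁ a₂ a₃ b₁ b₂ b₃ : ℤ}

/-- box element plus D is not in H -/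
lemma box_plusD (ha₁ : 1 ≤ a₁) (ha₂ : 1 ≤ a₂) (ha₃ : 1 ≤ a₃)
    (hb₁ : 1 ≤ b₁) (hb₂ : 1 ≤ b₂) (hb₃ : 1 ≤ b₃)
    {x₁ x₂ x₃ y₁ y₂ y₃ s t : ℤ}
    (hx₁ : 0 ≤ x₁) (hx₂ : 0 ≤ x₂) (hx₃ : 0 ≤ x₃)
    (hy₁ : 0 ≤ y₁) (hy₂ : 0 ≤ y₂) (hy₃ : 0 ≤ y₃)
    (hd₁ : x₁ ≤ a₁ - 1) (hd₁' : x₁ ≤ b₁ - 1)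
    (hd₂ : x₂ ≤ a₂ - 1) (hd₂' : x₂ ≤ b₂ - 1)
    (hd₃ : x₃ ≤ a₃ - 1) (hd₃' : x₃ ≤ b₃ - 1)
    (e1 : y₁ + a₁ - x₁ = s*(a₁+b₁) - t*a₁)
    (e2 : y₂ - x₂ - b₂ = t*(a₂+b₂) - s*b₂)
    (e3 : y₃ - x₃ = -(s*a₃) - t*b₃) : False := by
  rcases le_or_gt s 0 with hs | hs <;> rcases le_or_gt t 0 with ht | ht
  · -- s ≤ 0, t ≤ 0
    rcases lt_trichotomy s 0 with hs1 | hs1 | hs1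
    · rcases lt_trichotomy t 0 with ht1 | ht1 | ht1
      · -- s ≤ -1, t ≤ -1 : q ≥ p+2 then e2 fails
        have hp : 1 ≤ -s := by omega
        have hq : 1 ≤ -t := by omega
        have hqp : -t ≥ -s + 2 := by
          by_contra hc
          push_neg at hc
          -- -t ≤ -s+1 : e1: y₁ + a₁ - x₁ = -( -s)*(c₁) + (-t)*a₁ ≤ -(-s)c₁ + (-s+1)a₁
          have h1 : (-t)*a₁ ≤ (-s+1)*a₁ := by
            nlinarith [mul_nonneg (by linarith : (0:ℤ) ≤ (-s+1)-(-t)) (by linarith : (0:ℤ) ≤ a₁)]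
          nlinarith [mul_nonneg (by linarith : (0:ℤ) ≤ -s-1) (by linarith : (0:ℤ) ≤ b₁),
            mul_nonneg (by linarith : (0:ℤ) ≤ -s) (by linarith : (0:ℤ) ≤ b₁)]
        have h2 : (-t)*(a₂+b₂) ≥ (-s+2)*(a₂+b₂) := by
          nlinarith [mul_nonneg (by linarith : (0:ℤ) ≤ (-t)-(-s+2)) (by linarith : (0:ℤ) ≤ a₂+b₂)]
        nlinarith [mul_nonneg (by linarith : (0:ℤ) ≤ -s) (by linarith : (0:ℤ) ≤ a₂)]
      · -- s ≤ -1, t = 0 : e1: y₁ = x₁ + s*c₁ - a₁ < 0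
        subst ht1
        nlinarith [mul_nonneg (by linarith : (0:ℤ) ≤ -s-1) (by linarith : (0:ℤ) ≤ a₁+b₁)]
      · omega
    · -- s = 0
      subst hs1
      rcases lt_trichotomy t 0 with ht1 | ht1 | ht1
      · -- t ≤ -1 : e2 : y₂ = x₂ + b₂ + t*c₂ ≤ x₂ - a₂ < 0
        nlinarith [mul_nonneg (by linarith : (0:ℤ) ≤ -t-1) (by linarith : (0:ℤ) ≤ a₂+b₂)]
      · subst ht1; simp at e1; nlinarith
      · omega
    · omega
  · -- s ≤ 0, t ≥ 1 : e1 : y₁ ≤ x₁ - 2a₁ < 0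
    nlinarith [mul_nonneg (by linarith : (0:ℤ) ≤ -s) (by linarith : (0:ℤ) ≤ a₁+b₁),
      mul_nonneg (by linarith : (0:ℤ) ≤ t-1) (by linarith : (0:ℤ) ≤ a₁)]
  · -- s ≥ 1, t ≤ 0
    rcases lt_trichotomy s 1 with hs1 | hs1 | hs1
    · omega
    · subst hs1
      rcases lt_trichotomy t 0 with ht1 | ht1 | ht1
      · -- s = 1, t ≤ -1 : e2 : y₂ = x₂ + t*c₂ ≤ x₂ - c₂ < 0
        nlinarith [mul_nonneg (by linarith : (0:ℤ) ≤ -t-1) (by linarith : (0:ℤ) ≤ a₂+b₂)]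
      · -- s = 1, t = 0 : e3 : y₃ = x₃ - a₃ < 0
        subst ht1; simp at e3; nlinarith
      · omega
    · -- s ≥ 2, t ≤ 0 : e2 : y₂ ≤ x₂ + b₂(1-s) + t*c₂ ≤ x₂ - b₂ < 0
      nlinarith [mul_nonneg (by linarith : (0:ℤ) ≤ s-2) (by linarith : (0:ℤ) ≤ b₂),
        mul_nonneg (by linarith : (0:ℤ) ≤ -t) (by linarith : (0:ℤ) ≤ a₂+b₂)]
  · -- s ≥ 1, t ≥ 1 : e3 : x₃ - y₃ = s*a₃ + t*b₃ ≥ a₃+b₃ > x₃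
    nlinarith [mul_nonneg (by linarith : (0:ℤ) ≤ s-1) (by linarith : (0:ℤ) ≤ a₃),
      mul_nonneg (by linarith : (0:ℤ) ≤ t-1) (by linarith : (0:ℤ) ≤ b₃)]

/-- box element minus D is not in H -/
lemma box_minusD (ha₁ : 1 ≤ a₁) (ha₂ : 1 ≤ a₂) (ha₃ : 1 ≤ a₃)
    (hb₁ : 1 ≤ b₁) (hb₂ : 1 ≤ b₂) (hb₃ : 1 ≤ b₃)
    {x₁ x₂ x₃ y₁ y₂ y₃ s t : ℤ}
    (hx₁ : 0 ≤ x₁) (hx₂ : 0 ≤ x₂) (hx₃ : 0 ≤ x₃)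
    (hy₁ : 0 ≤ y₁) (hy₂ : 0 ≤ y₂) (hy₃ : 0 ≤ y₃)
    (hd₁ : x₁ ≤ a₁ - 1) (hd₁' : x₁ ≤ b₁ - 1)
    (hd₂ : x₂ ≤ a₂ - 1) (hd₂' : x₂ ≤ b₂ - 1)
    (hd₃ : x₃ ≤ a₃ - 1) (hd₃' : x₃ ≤ b₃ - 1)
    (e1 : x₁ + a₁ - y₁ = s*(a₁+b₁) - t*a₁)
    (e2 : x₂ - y₂ - b₂ = t*(a₂+b₂) - s*b₂)
    (e3 : x₃ - y₃ = -(s*a₃) - t*b₃) : False := by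
  rcases le_or_gt s 0 with hs | hs <;> rcases le_or_gt t 0 with ht | ht
  · -- s ≤ 0, t ≤ 0
    rcases lt_trichotomy s 0 with hs1 | hs1 | hs1
    · -- s ≤ -1 : e3 : y₃ = x₃ + s*a₃ + t*b₃ ≤ x₃ - a₃ < 0
      nlinarith [mul_nonneg (by linarith : (0:ℤ) ≤ -s-1) (by linarith : (0:ℤ) ≤ a₃),
        mul_nonneg (by linarith : (0:ℤ) ≤ -t) (by linarith : (0:ℤ) ≤ b₃)]
    · subst hs1
      rcases lt_trichotomy t 0 with ht1 | ht1 | ht1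
      · nlinarith [mul_nonneg (by linarith : (0:ℤ) ≤ -t-1) (by linarith : (0:ℤ) ≤ b₃)]
      · subst ht1; simp at e2; nlinarith
      · omega
    · omega
  · -- s ≤ 0, t ≥ 1 : e2 : x₂ - y₂ - b₂ = t*c₂ - s*b₂ ≥ c₂ → x₂ ≥ b₂ + c₂
    nlinarith [mul_nonneg (by linarith : (0:ℤ) ≤ -s) (by linarith : (0:ℤ) ≤ b₂),
      mul_nonneg (by linarith : (0:ℤ) ≤ t-1) (by linarith : (0:ℤ) ≤ a₂+b₂)]
  · -- s ≥ 1, t ≤ 0 : e1 : x₁ + a₁(t+1) ≥ s*c₁ → x₁ ≥ b₁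
    nlinarith [mul_nonneg (by linarith : (0:ℤ) ≤ s-1) (by linarith : (0:ℤ) ≤ a₁+b₁),
      mul_nonneg (by linarith : (0:ℤ) ≤ -t) (by linarith : (0:ℤ) ≤ a₁)]
  · -- s ≥ 1, t ≥ 1 : first s ≥ t+1 via e2, then e1 gives x₁ ≥ (t+1)b₁ ≥ 2b₁
    have hst : t + 1 ≤ s := by
      by_contra hc
      push_neg at hc
      -- s ≤ t : s*b₂ ≤ t*b₂ ≤ t*c₂ ; e2 : x₂ = y₂ + b₂ + t*c₂ - s*b₂ ≥ b₂
      have h1 : s*b₂ ≤ t*b₂ := by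
        nlinarith [mul_nonneg (by linarith : (0:ℤ) ≤ t-s) (by linarith : (0:ℤ) ≤ b₂)]
      nlinarith [mul_nonneg (by linarith : (0:ℤ) ≤ t) (by linarith : (0:ℤ) ≤ a₂)]
    have h2 : s*(a₁+b₁) ≥ (t+1)*(a₁+b₁) := by
      nlinarith [mul_nonneg (by linarith : (0:ℤ) ≤ s-(t+1)) (by linarith : (0:ℤ) ≤ a₁+b₁)]
    nlinarith [mul_nonneg (by linarith : (0:ℤ) ≤ t-1) (by linarith : (0:ℤ) ≤ b₁)]

/-- distinct box elements have distinct values -/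
lemma box_inj (ha₁ : 1 ≤ a₁) (ha₂ : 1 ≤ a₂) (ha₃ : 1 ≤ a₃)
    (hb₁ : 1 ≤ b₁) (hb₂ : 1 ≤ b₂) (hb₃ : 1 ≤ b₃)
    {x₁ x₂ x₃ y₁ y₂ y₃ s t : ℤ}
    (hx₁ : 0 ≤ x₁) (hx₂ : 0 ≤ x₂) (hx₃ : 0 ≤ x₃)
    (hy₁ : 0 ≤ y₁) (hy₂ : 0 ≤ y₂) (hy₃ : 0 ≤ y₃)
    (hd₁ : x₁ ≤ a₁ - 1) (hd₁' : x₁ ≤ b₁ - 1)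
    (hd₂ : x₂ ≤ a₂ - 1) (hd₂' : x₂ ≤ b₂ - 1)
    (hd₃ : x₃ ≤ a₃ - 1) (hd₃' : x₃ ≤ b₃ - 1)
    (he₁ : y₁ ≤ a₁ - 1) (he₁' : y₁ ≤ b₁ - 1)
    (he₂ : y₂ ≤ a₂ - 1) (he₂' : y₂ ≤ b₂ - 1)
    (he₃ : y₃ ≤ a₃ - 1) (he₃' : y₃ ≤ b₃ - 1)
    (e1 : y₁ - x₁ = s*(a₁+b₁) - t*a₁)
    (e2 : y₂ - x₂ = t*(a₂+b₂) - s*b₂)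
    (e3 : y₃ - x₃ = -(s*a₃) - t*b₃) :
    y₁ = x₁ ∧ y₂ = x₂ ∧ y₃ = x₃ := by
  have hst : s = 0 ∧ t = 0 := by
    rcases le_or_gt s 0 with hs | hs <;> rcases le_or_gt t 0 with ht | ht
    · rcases lt_trichotomy s 0 with hs1 | hs1 | hs1
      · -- s ≤ -1, t ≤ 0 : e3 : y₃ - x₃ = -s*a₃ - t*b₃ ≥ a₃ > y₃
        exfalso
        nlinarith [mul_nonneg (by linarith : (0:ℤ) ≤ -s-1) (by linarith : (0:ℤ) ≤ a₃),
          mul_nonneg (by linarith : (0:ℤ) ≤ -t) (by linarith : (0:ℤ) ≤ b₃)]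
      · subst hs1
        rcases lt_trichotomy t 0 with ht1 | ht1 | ht1
        · -- s = 0, t ≤ -1 : e1 : y₁ - x₁ = -t*a₁ ≥ a₁
          exfalso
          nlinarith [mul_nonneg (by linarith : (0:ℤ) ≤ -t-1) (by linarith : (0:ℤ) ≤ a₁)]
        · exact ⟨rfl, ht1⟩
        · omega
      · omega
    · -- s ≤ 0, t ≥ 1 : e2 : y₂ - x₂ = t*c₂ - s*b₂ ≥ c₂
      exfalso
      nlinarith [mul_nonneg (by linarith : (0:ℤ) ≤ -s) (by linarith : (0:ℤ) ≤ b₂),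
        mul_nonneg (by linarith : (0:ℤ) ≤ t-1) (by linarith : (0:ℤ) ≤ a₂+b₂)]
    · -- s ≥ 1, t ≤ 0 : e2 : x₂ - y₂ = s*b₂ - t*c₂ ≥ b₂
      exfalso
      nlinarith [mul_nonneg (by linarith : (0:ℤ) ≤ s-1) (by linarith : (0:ℤ) ≤ b₂),
        mul_nonneg (by linarith : (0:ℤ) ≤ -t) (by linarith : (0:ℤ) ≤ a₂+b₂)]
    · -- s ≥ 1, t ≥ 1 : e3 : x₃ - y₃ ≥ a₃ + b₃
      exfalso
      nlinarith [mul_nonneg (by linarith : (0:ℤ) ≤ s-1) (by linarith : (0:ℤ) ≤ a₃),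
        mul_nonneg (by linarith : (0:ℤ) ≤ t-1) (by linarith : (0:ℤ) ≤ b₃)]
  obtain ⟨rfl, rfl⟩ := hst
  refine ⟨by linarith [e1], by linarith [e2], by linarith [e3]⟩
end ZLemmas3

section Main

variable {H : Set ℕ} {n₁ n₂ n₃ a₁ a₂ a₃ b₁ b₂ b₃ : ℕ}

lemma genBy_zero (m k : ℕ) : genBy {0, m, k} = genBy {m, k} := by
  show ((AddSubmonoid.closure ({0, m, k} : Set ℕ) : Set ℕ)) = _
  congr 1
  refine le_antisymm (AddSubmonoid.closure_le.2 ?_) (AddSubmonoid.closure_mono ?_)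
  · rintro x (rfl | hx)
    · exact zero_mem _
    · exact AddSubmonoid.subset_closure hx
  · intro x hx
    simp only [Set.mem_insert_iff, Set.mem_singleton_iff] at hx ⊢
    tauto

lemma hn₁pos (hgen : H = genBy {n₁, n₂, n₃}) (hmin : ∀ x y : ℕ, H ≠ genBy {x, y}) :
    0 < n₁ := by
  rcases Nat.eq_zero_or_pos n₁ with rfl | h
  · exact absurd (hgen.trans (genBy_zero n₂ n₃)) (hmin n₂ n₃)
  · exact h

lemma hn₂pos (hgen : H = genBy {n₁, n₂, n₃}) (hmin : ∀ x y : ℕ, H ≠ genBy {x, y}) :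
    0 < n₂ := by
  rcases Nat.eq_zero_or_pos n₂ with rfl | h
  · refine absurd (hgen.trans ?_) (hmin n₁ n₃)
    rw [show ({n₁, 0, n₃} : Set ℕ) = {0, n₁, n₃} by ext x; simp; tauto]
    exact genBy_zero n₁ n₃
  · exact h

lemma hn₃pos (hgen : H = genBy {n₁, n₂, n₃}) (hmin : ∀ x y : ℕ, H ≠ genBy {x, y}) :
    0 < n₃ := by
  rcases Nat.eq_zero_or_pos n₃ with rfl | h
  · refine absurd (hgen.trans ?_) (hmin n₁ n₂)
    rw [show ({n₁, n₂, 0} : Set ℕ) = {0, n₁, n₂} by ext x; simp; tauto]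
    exact genBy_zero n₁ n₂
  · exact h

lemma memN (hgen : H = genBy {n₁, n₂, n₃}) (x₁ x₂ x₃ : ℕ) :
    x₁*n₁ + x₂*n₂ + x₃*n₃ ∈ H := by
  rw [hgen]; exact mem_genBy3 n₁ n₂ n₃ x₁ x₂ x₃

lemma memZ_iff (hgen : H = genBy {n₁, n₂, n₃}) (z : ℤ) :
    memZ H z ↔ ∃ x₁ x₂ x₃ : ℕ, z = (x₁:ℤ)*n₁ + (x₂:ℤ)*n₂ + (x₃:ℤ)*n₃ := by
  constructor
  · rintro ⟨h, hH, rfl⟩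
    rw [hgen] at hH
    obtain ⟨x₁, x₂, x₃, rfl⟩ := genBy3_elim hH
    exact ⟨x₁, x₂, x₃, by push_cast; ring⟩
  · rintro ⟨x₁, x₂, x₃, rfl⟩
    exact ⟨x₁*n₁+x₂*n₂+x₃*n₃, memN hgen x₁ x₂ x₃, by push_cast; ring⟩

lemma memZ_addH (hnum : IsNumSgp H) {z : ℤ} (hz : memZ H z) {h : ℕ} (hh : h ∈ H) :
    memZ H (z + (h:ℤ)) := by
  obtain ⟨m, hm, rfl⟩ := hz
  exact ⟨m + h, hnum.2.1 m hm h hh, by push_cast; ring⟩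

end Main

section PF

variable {H : Set ℕ} {n₁ n₂ n₃ a₁ a₂ a₃ b₁ b₂ b₃ : ℕ}

lemma pf_eq (hgen : H = genBy {n₁, n₂, n₃}) (hnum : IsNumSgp H)
    (hmin : ∀ x y : ℕ, H ≠ genBy {x, y})
    (ha₁ : 0 < a₁) (ha₂ : 0 < a₂) (ha₃ : 0 < a₃)
    (hb₁ : 0 < b₁) (hb₂ : 0 < b₂) (hb₃ : 0 < b₃)
    (h1 : (a₁ + b₁) * n₁ = b₂ * n₂ + a₃ * n₃)
    (h2 : (a₂ + b₂) * n₂ = a₁ * n₁ + b₃ * n₃)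
    (h3 : (a₃ + b₃) * n₃ = b₁ * n₁ + a₂ * n₂)
    (hm1 : ∀ c : ℕ, 0 < c → c * n₁ ∈ genBy {n₂, n₃} → a₁ + b₁ ≤ c)
    (hm2 : ∀ c : ℕ, 0 < c → c * n₂ ∈ genBy {n₁, n₃} → a₂ + b₂ ≤ c)
    (hm3 : ∀ c : ℕ, 0 < c → c * n₃ ∈ genBy {n₁, n₂} → a₃ + b₃ ≤ c) :
    pseudoFrob H = {((a₂:ℤ)+b₂-1)*n₂ + ((a₃:ℤ)-1)*n₃ - n₁,
      ((b₂:ℤ)-1)*n₂ + ((a₃:ℤ)+b₃-1)*n₃ - n₁} := by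
  have hn₁ := hn₁pos hgen hmin
  have hn₂ := hn₂pos hgen hmin
  have hn₃ := hn₃pos hgen hmin
  have h1Z : ((a₁:ℤ)+b₁)*n₁ = (b₂:ℤ)*n₂ + (a₃:ℤ)*n₃ := by exact_mod_cast h1
  have h2Z : ((a₂:ℤ)+b₂)*n₂ = (a₁:ℤ)*n₁ + (b₃:ℤ)*n₃ := by exact_mod_cast h2
  have h3Z : ((a₃:ℤ)+b₃)*n₃ = (b₁:ℤ)*n₁ + (a₂:ℤ)*n₂ := by exact_mod_cast h3
  have ha₁Z : (1:ℤ) ≤ a₁ := by exact_mod_cast ha₁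
  have ha₂Z : (1:ℤ) ≤ a₂ := by exact_mod_cast ha₂
  have ha₃Z : (1:ℤ) ≤ a₃ := by exact_mod_cast ha₃
  have hb₁Z : (1:ℤ) ≤ b₁ := by exact_mod_cast hb₁
  have hb₂Z : (1:ℤ) ≤ b₂ := by exact_mod_cast hb₂
  have hb₃Z : (1:ℤ) ≤ b₃ := by exact_mod_cast hb₃
  ext f
  simp only [Set.mem_insert_iff, Set.mem_singleton_iff]
  constructor
  · rintro ⟨hfn, hfa⟩
    have hn1H : n₁ ∈ H := by simpa using memN hgen 1 0 0
    have hn2H : n₂ ∈ H := by simpa using memN hgen 0 1 0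
    have hn3H : n₃ ∈ H := by simpa using memN hgen 0 0 1
    obtain ⟨u₁, u₂, u₃, hu⟩ := (memZ_iff hgen _).1 (hfa n₁ hn1H (by omega))
    obtain ⟨v₁, v₂, v₃, hv⟩ := (memZ_iff hgen _).1 (hfa n₂ hn2H (by omega))
    obtain ⟨w₁, w₂, w₃, hw⟩ := (memZ_iff hgen _).1 (hfa n₃ hn3H (by omega))
    -- u₁ = 0
    have hu₁0 : u₁ = 0 := by
      rcases Nat.eq_zero_or_pos u₁ with h | h
      · exact h
      · exfalso
        refine hfn ((memZ_iff hgen f).2 ⟨u₁ - 1, u₂, u₃, ?_⟩)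
        have c1 : ((u₁-1:ℕ):ℤ) = (u₁:ℤ) - 1 := by omega
        rw [c1]; linarith [hu]
    have hv₂0 : v₂ = 0 := by
      rcases Nat.eq_zero_or_pos v₂ with h | h
      · exact h
      · exfalso
        refine hfn ((memZ_iff hgen f).2 ⟨v₁, v₂ - 1, v₃, ?_⟩)
        have c1 : ((v₂-1:ℕ):ℤ) = (v₂:ℤ) - 1 := by omega
        rw [c1]; linarith [hv]
    have hw₃0 : w₃ = 0 := by
      rcases Nat.eq_zero_or_pos w₃ with h | h
      · exact h
      · exfalso
        refine hfn ((memZ_iff hgen f).2 ⟨w₁, w₂, w₃ - 1, ?_⟩)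
        have c1 : ((w₃-1:ℕ):ℤ) = (w₃:ℤ) - 1 := by omega
        rw [c1]; linarith [hw]
    subst hu₁0; subst hv₂0; subst hw₃0
    push_cast at hu hv hw
    -- bounds
    have hv₁b : (v₁:ℤ) ≤ (a₁:ℤ)+b₁ - 1 := by
      by_contra hc
      push_neg at hc
      have hc' : a₁ + b₁ ≤ v₁ := by omega
      refine hfn ((memZ_iff hgen f).2 ⟨v₁ - (a₁+b₁), b₂ - 1, v₃ + a₃, ?_⟩)
      have c1 : ((v₁-(a₁+b₁):ℕ):ℤ) = (v₁:ℤ) - (a₁+b₁) := by omega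
      have c2 : ((b₂-1:ℕ):ℤ) = (b₂:ℤ) - 1 := by omega
      rw [c1, c2]
      push_cast
      linear_combination hv + h1Z
    have hu₂b : (u₂:ℤ) ≤ (a₂:ℤ)+b₂ - 1 := by
      by_contra hc
      push_neg at hc
      have hc' : a₂ + b₂ ≤ u₂ := by omega
      refine hfn ((memZ_iff hgen f).2 ⟨a₁ - 1, u₂ - (a₂+b₂), u₃ + b₃, ?_⟩)
      have c1 : ((u₂-(a₂+b₂):ℕ):ℤ) = (u₂:ℤ) - (a₂+b₂) := by omega
      have c2 : ((a₁-1:ℕ):ℤ) = (a₁:ℤ) - 1 := by omega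
      rw [c1, c2]
      push_cast
      linear_combination hu + h2Z
    have hw₁b : (w₁:ℤ) ≤ (a₁:ℤ)+b₁ - 1 := by
      by_contra hc
      push_neg at hc
      have hc' : a₁ + b₁ ≤ w₁ := by omega
      refine hfn ((memZ_iff hgen f).2 ⟨w₁ - (a₁+b₁), w₂ + b₂, a₃ - 1, ?_⟩)
      have c1 : ((w₁-(a₁+b₁):ℕ):ℤ) = (w₁:ℤ) - (a₁+b₁) := by omega
      have c2 : ((a₃-1:ℕ):ℤ) = (a₃:ℤ) - 1 := by omega
      rw [c1, c2]
      push_cast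
      linear_combination hw + h1Z
    have hu₃b : (u₃:ℤ) ≤ (a₃:ℤ)+b₃ - 1 := by
      by_contra hc
      push_neg at hc
      have hc' : a₃ + b₃ ≤ u₃ := by omega
      refine hfn ((memZ_iff hgen f).2 ⟨b₁ - 1, u₂ + a₂, u₃ - (a₃+b₃), ?_⟩)
      have c1 : ((u₃-(a₃+b₃):ℕ):ℤ) = (u₃:ℤ) - (a₃+b₃) := by omega
      have c2 : ((b₁-1:ℕ):ℤ) = (b₁:ℤ) - 1 := by omega
      rw [c1, c2]
      push_cast
      linear_combination hu + h3Z
    have hw₂b : (w₂:ℤ) ≤ (a₂:ℤ)+b₂ - 1 := by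
      by_contra hc
      push_neg at hc
      have hc' : a₂ + b₂ ≤ w₂ := by omega
      refine hfn ((memZ_iff hgen f).2 ⟨w₁ + a₁, w₂ - (a₂+b₂), b₃ - 1, ?_⟩)
      have c1 : ((w₂-(a₂+b₂):ℕ):ℤ) = (w₂:ℤ) - (a₂+b₂) := by omega
      have c2 : ((b₃-1:ℕ):ℤ) = (b₃:ℤ) - 1 := by omega
      rw [c1, c2]
      push_cast
      linear_combination hw + h2Z
    -- lattice pair 1 : u + e₂ = v + e₁
    have hp1 : 0*n₁+(u₂+1)*n₂+u₃*n₃ = (v₁+1)*n₁+0*n₂+v₃*n₃ := by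
      have : (0:ℤ)*n₁+((u₂:ℤ)+1)*n₂+(u₃:ℤ)*n₃ = ((v₁:ℤ)+1)*n₁+0*n₂+(v₃:ℤ)*n₃ := by
        linarith [hu, hv]
      exact_mod_cast this
    obtain ⟨s, t, e1, e2, e3⟩ := lattice hn₁ hn₂ hn₃ ha₁ ha₂ ha₃ hb₁ hb₂ hb₃ h1 h2 h3
      hm1 hm2 hm3 0 (u₂+1) u₃ (v₁+1) 0 v₃ hp1
    push_cast at e1 e2 e3
    have vc := Vcase ha₁Z ha₂Z ha₃Z hb₁Z hb₂Z hb₃Z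
      (s := s) (t := t)
      (by linarith [Int.natCast_nonneg v₁]) (by linarith)
      (by linarith [Int.natCast_nonneg u₂]) (by linarith)
    -- lattice pair 2 : u + e₃ = w + e₁
    have hp2 : 0*n₁+u₂*n₂+(u₃+1)*n₃ = (w₁+1)*n₁+w₂*n₂+0*n₃ := by
      have : (0:ℤ)*n₁+(u₂:ℤ)*n₂+((u₃:ℤ)+1)*n₃ = ((w₁:ℤ)+1)*n₁+(w₂:ℤ)*n₂+0*n₃ := by
        linarith [hu, hw]
      exact_mod_cast this
    obtain ⟨s', t', e1', e2', e3'⟩ := lattice hn₁ hn₂ hn₃ ha₁ ha₂ ha₃ hb₁ hb₂ hb₃ h1 h2 h3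
      hm1 hm2 hm3 0 u₂ (u₃+1) (w₁+1) w₂ 0 hp2
    push_cast at e1' e2' e3'
    obtain ⟨hs', ht'⟩ := Wcase ha₁Z ha₂Z ha₃Z hb₁Z hb₂Z hb₃Z
      (s := s') (t := t')
      (by linarith [Int.natCast_nonneg w₁]) (by linarith)
      (by linarith [Int.natCast_nonneg u₃]) (by linarith)
    subst hs'
    rcases ht' with ht' | ht'
    · -- t' = 0 : u₃ = a₃ - 1, w₂ = u₂ - b₂ ≥ 0, so u₂ = c₂ - 1, f = F₁
      subst ht'
      left
      have hu₃v : (u₃:ℤ) = (a₃:ℤ) - 1 := by linarith [e3']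
      have hw₂v : (w₂:ℤ) = (u₂:ℤ) - b₂ := by linarith [e2']
      have hu₂v : (u₂:ℤ) = (a₂:ℤ) + b₂ - 1 := by
        rcases vc with ⟨hs, ht⟩ | ⟨hs, ht⟩
        · exfalso
          subst hs; subst ht
          have : (u₂:ℤ) = (b₂:ℤ) - 1 := by linarith [e2]
          have := Int.natCast_nonneg w₂
          linarith
        · subst hs; subst ht
          linarith [e2]
      linear_combination hu + (n₂:ℤ)*hu₂v + (n₃:ℤ)*hu₃v
    · -- t' = 1 : u₃ = c₃ - 1, w₂ = u₂ + a₂ ≤ c₂ - 1, so u₂ = b₂ - 1, f = F₂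
      subst ht'
      right
      have hu₃v : (u₃:ℤ) = (a₃:ℤ) + b₃ - 1 := by linarith [e3']
      have hw₂v : (w₂:ℤ) = (u₂:ℤ) + a₂ := by linarith [e2']
      have hu₂v : (u₂:ℤ) = (b₂:ℤ) - 1 := by
        rcases vc with ⟨hs, ht⟩ | ⟨hs, ht⟩
        · subst hs; subst ht
          linarith [e2]
        · exfalso
          subst hs; subst ht
          have : (u₂:ℤ) = (a₂:ℤ) + b₂ - 1 := by linarith [e2]
          linarith
      linear_combination hu + (n₂:ℤ)*hu₂v + (n₃:ℤ)*hu₃v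
  · -- easy direction
    intro hf
    have memsum : ∀ y₁ y₂ y₃ : ℕ, memZ H ((y₁:ℤ)*n₁ + (y₂:ℤ)*n₂ + (y₃:ℤ)*n₃) := by
      intro y₁ y₂ y₃
      exact (memZ_iff hgen _).2 ⟨y₁, y₂, y₃, rfl⟩
    rcases hf with rfl | rfl
    · constructor
      · rintro hmem
        obtain ⟨x₁, x₂, x₃, hx⟩ := (memZ_iff hgen _).1 hmem
        have hnat : (x₁+1)*n₁+x₂*n₂+x₃*n₃ = 0*n₁+(a₂+b₂-1)*n₂+(a₃-1)*n₃ := by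
          have c1 : ((a₂+b₂-1:ℕ):ℤ) = (a₂:ℤ)+b₂-1 := by omega
          have c2 : ((a₃-1:ℕ):ℤ) = (a₃:ℤ)-1 := by omega
          have : ((x₁:ℤ)+1)*n₁+(x₂:ℤ)*n₂+(x₃:ℤ)*n₃
              = 0*n₁+((a₂:ℤ)+b₂-1)*n₂+((a₃:ℤ)-1)*n₃ := by linarith [hx]
          rw [← c1, ← c2] at this
          exact_mod_cast this
        obtain ⟨s, t, e1, e2, e3⟩ := lattice hn₁ hn₂ hn₃ ha₁ ha₂ ha₃ hb₁ hb₂ hb₃ h1 h2 h3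
          hm1 hm2 hm3 (x₁+1) x₂ x₃ 0 (a₂+b₂-1) (a₃-1) hnat
        have c1 : ((a₂+b₂-1:ℕ):ℤ) = (a₂:ℤ)+b₂-1 := by omega
        have c2 : ((a₃-1:ℕ):ℤ) = (a₃:ℤ)-1 := by omega
        rw [c1] at e2; rw [c2] at e3
        push_cast at e1 e2 e3
        exact no_f1 ha₁Z ha₂Z ha₃Z hb₁Z hb₂Z hb₃Z (s := s) (t := t)
          (Int.natCast_nonneg x₁) (Int.natCast_nonneg x₂) (Int.natCast_nonneg x₃)
          (by linarith [e1]) (by linarith [e2]) (by linarith [e3])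
      · intro m hm hm0
        rw [hgen] at hm
        obtain ⟨y₁, y₂, y₃, rfl⟩ := genBy3_elim hm
        rcases Nat.eq_zero_or_pos y₁ with hy₁ | hy₁
        · rcases Nat.eq_zero_or_pos y₂ with hy₂ | hy₂
          · rcases Nat.eq_zero_or_pos y₃ with hy₃ | hy₃
            · exfalso; subst hy₁; subst hy₂; subst hy₃; simp at hm0
            · -- use F₁ + n₃ = (c₁-1)n₁ + (a₂-1)n₂
              have := memsum (a₁+b₁-1+y₁) (a₂-1+y₂) (y₃-1)
              convert this using 1
              have c1 : ((a₁+b₁-1+y₁:ℕ):ℤ) = (a₁:ℤ)+b₁-1+y₁ := by omega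
              have c2 : ((a₂-1+y₂:ℕ):ℤ) = (a₂:ℤ)-1+y₂ := by omega
              have c3 : ((y₃-1:ℕ):ℤ) = (y₃:ℤ)-1 := by omega
              rw [c1, c2, c3]
              push_cast
              linear_combination -h1Z
          · -- use F₁ + n₂ = (a₁-1)n₁ + (c₃-1)n₃
            have := memsum (a₁-1+y₁) (y₂-1) (a₃+b₃-1+y₃)
            convert this using 1
            have c1 : ((a₁-1+y₁:ℕ):ℤ) = (a₁:ℤ)-1+y₁ := by omega
            have c2 : ((y₂-1:ℕ):ℤ) = (y₂:ℤ)-1 := by omega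
            have c3 : ((a₃+b₃-1+y₃:ℕ):ℤ) = (a₃:ℤ)+b₃-1+y₃ := by omega
            rw [c1, c2, c3]
            push_cast
            linear_combination h2Z
        · have := memsum (y₁-1) (a₂+b₂-1+y₂) (a₃-1+y₃)
          convert this using 1
          have c1 : ((y₁-1:ℕ):ℤ) = (y₁:ℤ)-1 := by omega
          have c2 : ((a₂+b₂-1+y₂:ℕ):ℤ) = (a₂:ℤ)+b₂-1+y₂ := by omega
          have c3 : ((a₃-1+y₃:ℕ):ℤ) = (a₃:ℤ)-1+y₃ := by omega
          rw [c1, c2, c3]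
          push_cast
          ring
    · constructor
      · rintro hmem
        obtain ⟨x₁, x₂, x₃, hx⟩ := (memZ_iff hgen _).1 hmem
        have hnat : (x₁+1)*n₁+x₂*n₂+x₃*n₃ = 0*n₁+(b₂-1)*n₂+(a₃+b₃-1)*n₃ := by
          have c1 : ((b₂-1:ℕ):ℤ) = (b₂:ℤ)-1 := by omega
          have c2 : ((a₃+b₃-1:ℕ):ℤ) = (a₃:ℤ)+b₃-1 := by omega
          have : ((x₁:ℤ)+1)*n₁+(x₂:ℤ)*n₂+(x₃:ℤ)*n₃
              = 0*n₁+((b₂:ℤ)-1)*n₂+((a₃:ℤ)+b₃-1)*n₃ := by linarith [hx]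
          rw [← c1, ← c2] at this
          exact_mod_cast this
        obtain ⟨s, t, e1, e2, e3⟩ := lattice hn₁ hn₂ hn₃ ha₁ ha₂ ha₃ hb₁ hb₂ hb₃ h1 h2 h3
          hm1 hm2 hm3 (x₁+1) x₂ x₃ 0 (b₂-1) (a₃+b₃-1) hnat
        have c1 : ((b₂-1:ℕ):ℤ) = (b₂:ℤ)-1 := by omega
        have c2 : ((a₃+b₃-1:ℕ):ℤ) = (a₃:ℤ)+b₃-1 := by omega
        rw [c1] at e2; rw [c2] at e3
        push_cast at e1 e2 e3
        exact no_f2 ha₁Z ha₂Z ha₃Z hb₁Z hb₂Z hb₃Z (s := s) (t := t)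
          (Int.natCast_nonneg x₁) (Int.natCast_nonneg x₂) (Int.natCast_nonneg x₃)
          (by linarith [e1]) (by linarith [e2]) (by linarith [e3])
      · intro m hm hm0
        rw [hgen] at hm
        obtain ⟨y₁, y₂, y₃, rfl⟩ := genBy3_elim hm
        rcases Nat.eq_zero_or_pos y₁ with hy₁ | hy₁
        · rcases Nat.eq_zero_or_pos y₂ with hy₂ | hy₂
          · rcases Nat.eq_zero_or_pos y₃ with hy₃ | hy₃
            · exfalso; subst hy₁; subst hy₂; subst hy₃; simp at hm0
            · -- F₂ + n₃ = (b₁-1)n₁ + (c₂-1)n₂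
              have := memsum (b₁-1+y₁) (a₂+b₂-1+y₂) (y₃-1)
              convert this using 1
              have c1 : ((b₁-1+y₁:ℕ):ℤ) = (b₁:ℤ)-1+y₁ := by omega
              have c2 : ((a₂+b₂-1+y₂:ℕ):ℤ) = (a₂:ℤ)+b₂-1+y₂ := by omega
              have c3 : ((y₃-1:ℕ):ℤ) = (y₃:ℤ)-1 := by omega
              rw [c1, c2, c3]
              push_cast
              linear_combination h3Z
          · -- F₂ + n₂ = (c₁-1)n₁ + (b₃-1)n₃
            have := memsum (a₁+b₁-1+y₁) (y₂-1) (b₃-1+y₃)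
            convert this using 1
            have c1 : ((a₁+b₁-1+y₁:ℕ):ℤ) = (a₁:ℤ)+b₁-1+y₁ := by omega
            have c2 : ((y₂-1:ℕ):ℤ) = (y₂:ℤ)-1 := by omega
            have c3 : ((b₃-1+y₃:ℕ):ℤ) = (b₃:ℤ)-1+y₃ := by omega
            rw [c1, c2, c3]
            push_cast
            linear_combination -h1Z
        · have := memsum (y₁-1) (b₂-1+y₂) (a₃+b₃-1+y₃)
          convert this using 1
          have c1 : ((y₁-1:ℕ):ℤ) = (y₁:ℤ)-1 := by omega
          have c2 : ((b₂-1+y₂:ℕ):ℤ) = (b₂:ℤ)-1+y₂ := by omega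
          have c3 : ((a₃+b₃-1+y₃:ℕ):ℤ) = (a₃:ℤ)+b₃-1+y₃ := by omega
          rw [c1, c2, c3]
          push_cast
          ring

end PF

section TraceK

variable {H : Set ℕ} {n₁ n₂ n₃ a₁ a₂ a₃ b₁ b₂ b₃ : ℕ}

lemma trace_eq (hgen : H = genBy {n₁, n₂, n₃}) (hnum : IsNumSgp H)
    (hmin : ∀ x y : ℕ, H ≠ genBy {x, y})
    (ha₁ : 0 < a₁) (ha₂ : 0 < a₂) (ha₃ : 0 < a₃)
    (hb₁ : 0 < b₁) (hb₂ : 0 < b₂) (hb₃ : 0 < b₃)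
    (h1 : (a₁ + b₁) * n₁ = b₂ * n₂ + a₃ * n₃)
    (h2 : (a₂ + b₂) * n₂ = a₁ * n₁ + b₃ * n₃)
    (h3 : (a₃ + b₃) * n₃ = b₁ * n₁ + a₂ * n₂)
    (hm1 : ∀ c : ℕ, 0 < c → c * n₁ ∈ genBy {n₂, n₃} → a₁ + b₁ ≤ c)
    (hm2 : ∀ c : ℕ, 0 < c → c * n₂ ∈ genBy {n₁, n₃} → a₂ + b₂ ≤ c)
    (hm3 : ∀ c : ℕ, 0 < c → c * n₃ ∈ genBy {n₁, n₂} → a₃ + b₃ ≤ c) :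
    trace H = {z : ℤ | memZ H z ∧ (memZ H (z - ((b₂:ℤ)*n₂ - (a₁:ℤ)*n₁)) ∨
      memZ H (z + ((b₂:ℤ)*n₂ - (a₁:ℤ)*n₁)))} := by
  have h2Z : ((a₂:ℤ)+b₂)*n₂ = (a₁:ℤ)*n₁ + (b₃:ℤ)*n₃ := by exact_mod_cast h2
  have pf := pf_eq hgen hnum hmin ha₁ ha₂ ha₃ hb₁ hb₂ hb₃ h1 h2 h3 hm1 hm2 hm3
  set F₁ : ℤ := ((a₂:ℤ)+b₂-1)*n₂ + ((a₃:ℤ)-1)*n₃ - n₁ with hF₁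
  set F₂ : ℤ := ((b₂:ℤ)-1)*n₂ + ((a₃:ℤ)+b₃-1)*n₃ - n₁ with hF₂
  set DD : ℤ := (b₂:ℤ)*n₂ - (a₁:ℤ)*n₁ with hDDdef
  have hDD : F₂ - F₁ = DD := by rw [hF₁, hF₂, hDDdef]; linear_combination -h2Z
  have pm1 : F₁ ∈ pseudoFrob H := by rw [pf]; left; rfl
  have pm2 : F₂ ∈ pseudoFrob H := by rw [pf]; right; rfl
  have h0H : (0:ℕ) ∈ H := hnum.1
  ext z
  simp only [trace, Set.mem_setOf_eq]
  constructor
  · rintro ⟨w, hw, x, hx, rfl⟩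
    obtain ⟨g, hgPF, h, hh, rfl⟩ := hw
    have hx1 : memZ H (x - F₁) := by
      have := hx (-F₁ + ((0:ℕ):ℤ)) ⟨F₁, pm1, 0, h0H, rfl⟩
      simpa [sub_eq_add_neg] using this
    have hx2 : memZ H (x - F₂) := by
      have := hx (-F₂ + ((0:ℕ):ℤ)) ⟨F₂, pm2, 0, h0H, rfl⟩
      simpa [sub_eq_add_neg] using this
    rw [pf] at hgPF
    rcases hgPF with rfl | rfl
    · constructor
      · have := memZ_addH hnum hx1 hh
        rw [show x - F₁ + (h:ℤ) = -F₁ + h + x by ring] at this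
        exact this
      · left
        have := memZ_addH hnum hx2 hh
        rw [show x - F₂ + (h:ℤ) = -F₁ + h + x - DD by rw [← hDD]; ring] at this
        exact this
    · constructor
      · have := memZ_addH hnum hx2 hh
        rw [show x - F₂ + (h:ℤ) = -F₂ + h + x by ring] at this
        exact this
      · right
        have := memZ_addH hnum hx1 hh
        rw [show x - F₁ + (h:ℤ) = -F₂ + h + x + DD by rw [← hDD]; ring] at this
        exact this
  · rintro ⟨hz, hc | hc⟩
    · refine ⟨-F₁ + ((0:ℕ):ℤ), ⟨F₁, pm1, 0, h0H, rfl⟩, z + F₁, ?_, by push_cast; ring⟩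
      rintro w' ⟨g, hg, h, hh, rfl⟩
      rw [pf] at hg
      rcases hg with rfl | rfl
      · have := memZ_addH hnum hz hh
        rw [show z + (h:ℤ) = z + F₁ + (-F₁ + h) by ring] at this
        exact this
      · have := memZ_addH hnum hc hh
        rw [show z - DD + (h:ℤ) = z + F₁ + (-F₂ + h) by rw [← hDD]; ring] at this
        exact this
    · refine ⟨-F₂ + ((0:ℕ):ℤ), ⟨F₂, pm2, 0, h0H, rfl⟩, z + F₂, ?_, by push_cast; ring⟩
      rintro w' ⟨g, hg, h, hh, rfl⟩
      rw [pf] at hg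
      rcases hg with rfl | rfl
      · have := memZ_addH hnum hc hh
        rw [show z + DD + (h:ℤ) = z + F₂ + (-F₁ + h) by rw [← hDD]; ring] at this
        exact this
      · have := memZ_addH hnum hz hh
        rw [show z + (h:ℤ) = z + F₂ + (-F₂ + h) by ring] at this
        exact this

end TraceK


/-- for a non-symmetric 3-generated numerical semigroup with
structure constants `aᵢ, bᵢ` and `dᵢ = min{aᵢ, bᵢ}`, one has
`tr(H) = (d₁n₁ + H) ∪ (d₂n₂ + H) ∪ (d₃n₃ + H)` and `res(H) = d₁d₂d₃`. -/
theorem stmt_8 (H : Set ℕ) (n₁ n₂ n₃ : ℕ)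
    (hgen : H = genBy {n₁, n₂, n₃}) (hnum : IsNumSgp H)
    (hmin : ∀ x y : ℕ, H ≠ genBy {x, y})
    (hns : ¬ IsSymmetric H)
    (a₁ a₂ a₃ b₁ b₂ b₃ : ℕ)
    (ha₁ : 0 < a₁) (ha₂ : 0 < a₂) (ha₃ : 0 < a₃)
    (hb₁ : 0 < b₁) (hb₂ : 0 < b₂) (hb₃ : 0 < b₃)
    (h1 : (a₁ + b₁) * n₁ = b₂ * n₂ + a₃ * n₃)
    (h2 : (a₂ + b₂) * n₂ = a₁ * n₁ + b₃ * n₃)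
    (h3 : (a₃ + b₃) * n₃ = b₁ * n₁ + a₂ * n₂)
    (hmin1 : ∀ c : ℕ, 0 < c → c * n₁ ∈ genBy {n₂, n₃} → a₁ + b₁ ≤ c)
    (hmin2 : ∀ c : ℕ, 0 < c → c * n₂ ∈ genBy {n₁, n₃} → a₂ + b₂ ≤ c)
    (hmin3 : ∀ c : ℕ, 0 < c → c * n₃ ∈ genBy {n₁, n₂} → a₃ + b₃ ≤ c) :
    trace H =
      {z : ℤ | ∃ h ∈ H, z = ((min a₁ b₁ * n₁ + h : ℕ) : ℤ)} ∪
      {z : ℤ | ∃ h ∈ H, z = ((min a₂ b₂ * n₂ + h : ℕ) : ℤ)} ∪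
      {z : ℤ | ∃ h ∈ H, z = ((min a₃ b₃ * n₃ + h : ℕ) : ℤ)} ∧
    res H = min a₁ b₁ * min a₂ b₂ * min a₃ b₃ := by
  have hn₁ := hn₁pos hgen hmin
  have hn₂ := hn₂pos hgen hmin
  have hn₃ := hn₃pos hgen hmin
  have h1Z : ((a₁:ℤ)+b₁)*n₁ = (b₂:ℤ)*n₂ + (a₃:ℤ)*n₃ := by exact_mod_cast h1
  have h2Z : ((a₂:ℤ)+b₂)*n₂ = (a₁:ℤ)*n₁ + (b₃:ℤ)*n₃ := by exact_mod_cast h2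
  have h3Z : ((a₃:ℤ)+b₃)*n₃ = (b₁:ℤ)*n₁ + (a₂:ℤ)*n₂ := by exact_mod_cast h3
  have ha₁Z : (1:ℤ) ≤ a₁ := by exact_mod_cast ha₁
  have ha₂Z : (1:ℤ) ≤ a₂ := by exact_mod_cast ha₂
  have ha₃Z : (1:ℤ) ≤ a₃ := by exact_mod_cast ha₃
  have hb₁Z : (1:ℤ) ≤ b₁ := by exact_mod_cast hb₁
  have hb₂Z : (1:ℤ) ≤ b₂ := by exact_mod_cast hb₂
  have hb₃Z : (1:ℤ) ≤ b₃ := by exact_mod_cast hb₃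
  have tK := trace_eq hgen hnum hmin ha₁ ha₂ ha₃ hb₁ hb₂ hb₃ h1 h2 h3 hmin1 hmin2 hmin3
  set DD : ℤ := (b₂:ℤ)*n₂ - (a₁:ℤ)*n₁ with hDDdef
  have hDD3 : DD = (b₁:ℤ)*n₁ - (a₃:ℤ)*n₃ := by rw [hDDdef]; linear_combination -h1Z
  have hDD2 : DD = (b₃:ℤ)*n₃ - (a₂:ℤ)*n₂ := by rw [hDDdef]; linear_combination h2Z
  -- box elements are not in K
  have nplus : ∀ x₁ x₂ x₃ : ℕ, x₁ < min a₁ b₁ → x₂ < min a₂ b₂ → x₃ < min a₃ b₃ →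
      ¬ memZ H ((x₁:ℤ)*n₁+(x₂:ℤ)*n₂+(x₃:ℤ)*n₃ + DD) := by
    intro x₁ x₂ x₃ hx1 hx2 hx3 hmem
    obtain ⟨y₁, y₂, y₃, hy⟩ := (memZ_iff hgen _).1 hmem
    have hnat : x₁*n₁+(x₂+b₂)*n₂+x₃*n₃ = (y₁+a₁)*n₁+y₂*n₂+y₃*n₃ := by
      have : (x₁:ℤ)*n₁+((x₂:ℤ)+b₂)*n₂+(x₃:ℤ)*n₃
          = ((y₁:ℤ)+a₁)*n₁+(y₂:ℤ)*n₂+(y₃:ℤ)*n₃ := by rw [hDDdef] at hy; linarith [hy]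
      exact_mod_cast this
    obtain ⟨s, t, e1, e2, e3⟩ := lattice hn₁ hn₂ hn₃ ha₁ ha₂ ha₃ hb₁ hb₂ hb₃ h1 h2 h3
      hmin1 hmin2 hmin3 x₁ (x₂+b₂) x₃ (y₁+a₁) y₂ y₃ hnat
    push_cast at e1 e2 e3
    exact box_plusD ha₁Z ha₂Z ha₃Z hb₁Z hb₂Z hb₃Z (s := s) (t := t)
      (Int.natCast_nonneg x₁) (Int.natCast_nonneg x₂) (Int.natCast_nonneg x₃)
      (Int.natCast_nonneg y₁) (Int.natCast_nonneg y₂) (Int.natCast_nonneg y₃)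
      (by omega) (by omega) (by omega) (by omega) (by omega) (by omega)
      (by linarith [e1]) (by linarith [e2]) (by linarith [e3])
  have nminus : ∀ x₁ x₂ x₃ : ℕ, x₁ < min a₁ b₁ → x₂ < min a₂ b₂ → x₃ < min a₃ b₃ →
      ¬ memZ H ((x₁:ℤ)*n₁+(x₂:ℤ)*n₂+(x₃:ℤ)*n₃ - DD) := by
    intro x₁ x₂ x₃ hx1 hx2 hx3 hmem
    obtain ⟨y₁, y₂, y₃, hy⟩ := (memZ_iff hgen _).1 hmem
    have hnat : y₁*n₁+(y₂+b₂)*n₂+y₃*n₃ = (x₁+a₁)*n₁+x₂*n₂+x₃*n₃ := by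
      have : (y₁:ℤ)*n₁+((y₂:ℤ)+b₂)*n₂+(y₃:ℤ)*n₃
          = ((x₁:ℤ)+a₁)*n₁+(x₂:ℤ)*n₂+(x₃:ℤ)*n₃ := by rw [hDDdef] at hy; linarith [hy]
      exact_mod_cast this
    obtain ⟨s, t, e1, e2, e3⟩ := lattice hn₁ hn₂ hn₃ ha₁ ha₂ ha₃ hb₁ hb₂ hb₃ h1 h2 h3
      hmin1 hmin2 hmin3 y₁ (y₂+b₂) y₃ (x₁+a₁) x₂ x₃ hnat
    push_cast at e1 e2 e3
    exact box_minusD ha₁Z ha₂Z ha₃Z hb₁Z hb₂Z hb₃Z (s := s) (t := t)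
      (Int.natCast_nonneg x₁) (Int.natCast_nonneg x₂) (Int.natCast_nonneg x₃)
      (Int.natCast_nonneg y₁) (Int.natCast_nonneg y₂) (Int.natCast_nonneg y₃)
      (by omega) (by omega) (by omega) (by omega) (by omega) (by omega)
      (by linarith [e1]) (by linarith [e2]) (by linarith [e3])
  -- elements with a large coordinate are in K
  have escape : ∀ x₁ x₂ x₃ : ℕ,
      (min a₁ b₁ ≤ x₁ ∨ min a₂ b₂ ≤ x₂ ∨ min a₃ b₃ ≤ x₃) →
      memZ H ((x₁:ℤ)*n₁+(x₂:ℤ)*n₂+(x₃:ℤ)*n₃ - DD) ∨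
      memZ H ((x₁:ℤ)*n₁+(x₂:ℤ)*n₂+(x₃:ℤ)*n₃ + DD) := by
    intro x₁ x₂ x₃ hbig
    rcases hbig with hbig | hbig | hbig
    · rcases le_or_gt a₁ b₁ with hab | hab
      · right
        refine (memZ_iff hgen _).2 ⟨x₁ - a₁, x₂ + b₂, x₃, ?_⟩
        have c1 : ((x₁-a₁:ℕ):ℤ) = (x₁:ℤ) - a₁ := by omega
        rw [c1, hDDdef]; push_cast; ring
      · left
        refine (memZ_iff hgen _).2 ⟨x₁ - b₁, x₂, x₃ + a₃, ?_⟩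
        have c1 : ((x₁-b₁:ℕ):ℤ) = (x₁:ℤ) - b₁ := by omega
        rw [c1, hDD3]; push_cast; ring
    · rcases le_or_gt a₂ b₂ with hab | hab
      · right
        refine (memZ_iff hgen _).2 ⟨x₁, x₂ - a₂, x₃ + b₃, ?_⟩
        have c1 : ((x₂-a₂:ℕ):ℤ) = (x₂:ℤ) - a₂ := by omega
        rw [c1, hDD2]; push_cast; ring
      · left
        refine (memZ_iff hgen _).2 ⟨x₁ + a₁, x₂ - b₂, x₃, ?_⟩
        have c1 : ((x₂-b₂:ℕ):ℤ) = (x₂:ℤ) - b₂ := by omega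
        rw [c1, hDDdef]; push_cast; ring
    · rcases le_or_gt a₃ b₃ with hab | hab
      · right
        refine (memZ_iff hgen _).2 ⟨x₁ + b₁, x₂, x₃ - a₃, ?_⟩
        have c1 : ((x₃-a₃:ℕ):ℤ) = (x₃:ℤ) - a₃ := by omega
        rw [c1, hDD3]; push_cast; ring
      · left
        refine (memZ_iff hgen _).2 ⟨x₁, x₂ + a₂, x₃ - b₃, ?_⟩
        have c1 : ((x₃-b₃:ℕ):ℤ) = (x₃:ℤ) - b₃ := by omega
        rw [c1, hDD2]; push_cast; ring
  constructor
  · -- trace equality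
    rw [tK]
    ext z
    simp only [Set.mem_setOf_eq, Set.mem_union]
    constructor
    · rintro ⟨hz, hor⟩
      obtain ⟨x₁, x₂, x₃, rfl⟩ := (memZ_iff hgen _).1 hz
      by_cases hbox : x₁ < min a₁ b₁ ∧ x₂ < min a₂ b₂ ∧ x₃ < min a₃ b₃
      · exfalso
        obtain ⟨hx1, hx2, hx3⟩ := hbox
        rcases hor with hc | hc
        · exact nminus x₁ x₂ x₃ hx1 hx2 hx3 hc
        · exact nplus x₁ x₂ x₃ hx1 hx2 hx3 hc
      · push_neg at hbox
        rcases Nat.lt_or_ge x₁ (min a₁ b₁) with hx1 | hx1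
        · rcases Nat.lt_or_ge x₂ (min a₂ b₂) with hx2 | hx2
          · have hx3 : min a₃ b₃ ≤ x₃ := hbox hx1 hx2
            right
            refine ⟨(x₃ - min a₃ b₃)*n₃ + x₁*n₁ + x₂*n₂, ?_, ?_⟩
            · have := memN hgen x₁ x₂ (x₃ - min a₃ b₃)
              have e : x₁*n₁+x₂*n₂+(x₃ - min a₃ b₃)*n₃
                  = (x₃ - min a₃ b₃)*n₃ + x₁*n₁ + x₂*n₂ := by ring
              rwa [e] at this
            · have c1 : ((x₃ - min a₃ b₃:ℕ):ℤ) = (x₃:ℤ) - (min a₃ b₃:ℕ) := by omega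
              push_cast [c1]
              ring
          · left; right
            refine ⟨(x₂ - min a₂ b₂)*n₂ + x₁*n₁ + x₃*n₃, ?_, ?_⟩
            · have := memN hgen x₁ (x₂ - min a₂ b₂) x₃
              have e : x₁*n₁+(x₂ - min a₂ b₂)*n₂+x₃*n₃
                  = (x₂ - min a₂ b₂)*n₂ + x₁*n₁ + x₃*n₃ := by ring
              rwa [e] at this
            · have c1 : ((x₂ - min a₂ b₂:ℕ):ℤ) = (x₂:ℤ) - (min a₂ b₂:ℕ) := by omega
              push_cast [c1]
              ring
        · left; left
          refine ⟨(x₁ - min a₁ b₁)*n₁ + x₂*n₂ + x₃*n₃, ?_, ?_⟩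
          · have := memN hgen (x₁ - min a₁ b₁) x₂ x₃
            exact this
          · have c1 : ((x₁ - min a₁ b₁:ℕ):ℤ) = (x₁:ℤ) - (min a₁ b₁:ℕ) := by omega
            push_cast [c1]
            ring
    · intro hz
      have main : ∀ i : Fin 3, True := fun _ => trivial
      rcases hz with (⟨h, hh, rfl⟩ | ⟨h, hh, rfl⟩) | ⟨h, hh, rfl⟩
      · constructor
        · exact ⟨_, hnum.2.1 _ (by simpa using memN hgen (min a₁ b₁) 0 0) _ hh, rfl⟩
        · rcases le_or_gt a₁ b₁ with hab | hab
          · right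
            refine ⟨b₂*n₂ + h, hnum.2.1 _ (by simpa using memN hgen 0 b₂ 0) _ hh, ?_⟩
            have : min a₁ b₁ = a₁ := min_eq_left hab
            rw [this, hDDdef]; push_cast; ring
          · left
            refine ⟨a₃*n₃ + h, hnum.2.1 _ (by simpa using memN hgen 0 0 a₃) _ hh, ?_⟩
            have : min a₁ b₁ = b₁ := min_eq_right hab.le
            rw [this, hDD3]; push_cast; ring
      · constructor
        · exact ⟨_, hnum.2.1 _ (by simpa using memN hgen 0 (min a₂ b₂) 0) _ hh, rfl⟩
        · rcases le_or_gt a₂ b₂ with hab | hab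
          · right
            refine ⟨b₃*n₃ + h, hnum.2.1 _ (by simpa using memN hgen 0 0 b₃) _ hh, ?_⟩
            have : min a₂ b₂ = a₂ := min_eq_left hab
            rw [this, hDD2]; push_cast; ring
          · left
            refine ⟨a₁*n₁ + h, hnum.2.1 _ (by simpa using memN hgen a₁ 0 0) _ hh, ?_⟩
            have : min a₂ b₂ = b₂ := min_eq_right hab.le
            rw [this, hDDdef]; push_cast; ring
      · constructor
        · exact ⟨_, hnum.2.1 _ (by simpa using memN hgen 0 0 (min a₃ b₃)) _ hh, rfl⟩
        · rcases le_or_gt a₃ b₃ with hab | hab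
          · right
            refine ⟨b₁*n₁ + h, hnum.2.1 _ (by simpa using memN hgen b₁ 0 0) _ hh, ?_⟩
            have : min a₃ b₃ = a₃ := min_eq_left hab
            rw [this, hDD3]; push_cast; ring
          · left
            refine ⟨a₂*n₂ + h, hnum.2.1 _ (by simpa using memN hgen 0 a₂ 0) _ hh, ?_⟩
            have : min a₃ b₃ = b₃ := min_eq_right hab.le
            rw [this, hDD2]; push_cast; ring
  · -- residue
    classical
    set φ : ℕ×ℕ×ℕ → ℕ := fun p => p.1*n₁+p.2.1*n₂+p.2.2*n₃ with hφ
    set B : Finset (ℕ×ℕ×ℕ) :=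
      (Finset.range (min a₁ b₁)) ×ˢ (Finset.range (min a₂ b₂)) ×ˢ (Finset.range (min a₃ b₃))
      with hB
    have hmemB : ∀ p : ℕ×ℕ×ℕ,
        p ∈ B ↔ p.1 < min a₁ b₁ ∧ p.2.1 < min a₂ b₂ ∧ p.2.2 < min a₃ b₃ := by
      intro p; rw [hB]; simp [Finset.mem_product]
    have hcast : ∀ p : ℕ×ℕ×ℕ,
        ((φ p : ℕ):ℤ) = (p.1:ℤ)*n₁+(p.2.1:ℤ)*n₂+(p.2.2:ℤ)*n₃ := by
      intro p; rw [hφ]; push_cast; ring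
    have hset : {h : ℕ | h ∈ H ∧ (h : ℤ) ∉ trace H} = ↑(B.image φ) := by
      ext h
      simp only [Set.mem_setOf_eq, Finset.coe_image, Set.mem_image, Finset.mem_coe]
      constructor
      · rintro ⟨hh, hnt⟩
        rw [tK] at hnt
        simp only [Set.mem_setOf_eq] at hnt
        push_neg at hnt
        have hzmem : memZ H (h:ℤ) := ⟨h, hh, rfl⟩
        obtain ⟨hng1, hng2⟩ := hnt hzmem
        have hh' : h ∈ genBy {n₁, n₂, n₃} := by rw [← hgen]; exact hh
        obtain ⟨x₁, x₂, x₃, hx⟩ := genBy3_elim hh'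
        have hxZ : (h:ℤ) = (x₁:ℤ)*n₁+(x₂:ℤ)*n₂+(x₃:ℤ)*n₃ := by
          rw [hx]; push_cast; ring
        have hbig : ¬ (min a₁ b₁ ≤ x₁ ∨ min a₂ b₂ ≤ x₂ ∨ min a₃ b₃ ≤ x₃) := by
          intro hb
          rcases escape x₁ x₂ x₃ hb with hc | hc
          · rw [← hxZ] at hc; exact hng1 hc
          · rw [← hxZ] at hc; exact hng2 hc
        push_neg at hbig
        exact ⟨(x₁,x₂,x₃), (hmemB _).2 ⟨hbig.1, hbig.2.1, hbig.2.2⟩, by simp only [hφ]; exact hx.symm⟩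
      · rintro ⟨p, hp, rfl⟩
        rw [hmemB] at hp
        constructor
        · have := memN hgen p.1 p.2.1 p.2.2
          rw [hφ]; exact this
        · rw [tK]
          rintro ⟨_, hor⟩
          rw [hcast p] at hor
          rcases hor with hc | hc
          · exact nminus p.1 p.2.1 p.2.2 hp.1 hp.2.1 hp.2.2 hc
          · exact nplus p.1 p.2.1 p.2.2 hp.1 hp.2.1 hp.2.2 hc
    rw [res, hset, Set.ncard_coe_finset]
    have hinj : Set.InjOn φ ↑B := by
      rintro ⟨p₁,p₂,p₃⟩ hp ⟨q₁,q₂,q₃⟩ hq hpq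
      simp only [Finset.mem_coe] at hp hq
      rw [hmemB] at hp hq
      obtain ⟨hp1, hp2, hp3⟩ := hp
      obtain ⟨hq1, hq2, hq3⟩ := hq
      have hp1' : p₁ < min a₁ b₁ := hp1
      have hp2' : p₂ < min a₂ b₂ := hp2
      have hp3' : p₃ < min a₃ b₃ := hp3
      have hq1' : q₁ < min a₁ b₁ := hq1
      have hq2' : q₂ < min a₂ b₂ := hq2
      have hq3' : q₃ < min a₃ b₃ := hq3
      simp only [hφ] at hpq
      obtain ⟨s, t, e1, e2, e3⟩ := lattice hn₁ hn₂ hn₃ ha₁ ha₂ ha₃ hb₁ hb₂ hb₃ h1 h2 h3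
        hmin1 hmin2 hmin3 p₁ p₂ p₃ q₁ q₂ q₃ hpq
      obtain ⟨g1, g2, g3⟩ := box_inj ha₁Z ha₂Z ha₃Z hb₁Z hb₂Z hb₃Z (s := s) (t := t)
        (Int.natCast_nonneg p₁) (Int.natCast_nonneg p₂) (Int.natCast_nonneg p₃)
        (Int.natCast_nonneg q₁) (Int.natCast_nonneg q₂) (Int.natCast_nonneg q₃)
        (by omega) (by omega) (by omega) (by omega) (by omega) (by omega)
        (by omega) (by omega) (by omega) (by omega) (by omega) (by omega)
        e1 e2 e3
      simp only [Prod.mk.injEq]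
      refine ⟨by exact_mod_cast g1.symm, by exact_mod_cast g2.symm, by exact_mod_cast g3.symm⟩
    rw [Finset.card_image_of_injOn hinj, hB, Finset.card_product, Finset.card_product]
    simp [Nat.mul_assoc]
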